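/- arXiv:2509.03748 — 9 statements merged into one kernel-verified Lean document; each statement's English description precedes it below -/
import Mathlib

section
/- Let R be a division ring, c ∈ R a fixed element, and a₀, …, aₙ ∈ R. The set V ∪ {0}, where V = {y ∈ R \ {0} : Σᵢ₌₀ⁿ aᵢ y cⁱ = 0}, is a right vector subspace of R over the centralizer division subring R⁽ᶜ⁾ = {z ∈ R : zc = cz}. -/
/-- The set `V ∪ {0} = {y : ∑ aᵢ y cⁱ = 0}` is a right vector subspace of `R` over the
centralizer of `c`: it contains `0`, is closed under addition, and is closed under right
multiplication by elements commuting with `c`. -/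
theorem stmt7 {R : Type*} [DivisionRing R] (c : R) (n : ℕ) (a : Fin (n + 1) → R)
    (W : Set R) (hW : W = {y : R | ∑ i : Fin (n + 1), a i * y * c ^ (i : ℕ) = 0}) :
    (0 : R) ∈ W ∧ (∀ y ∈ W, ∀ z ∈ W, y + z ∈ W) ∧
      ∀ y ∈ W, ∀ z : R, z * c = c * z → y * z ∈ W := by
  subst hW
  refine ⟨by simp, ?_, ?_⟩
  · intro y hy z hz
    simp only [Set.mem_setOf_eq] at *
    simp [mul_add, add_mul, Finset.sum_add_distrib, hy, hz]
  · intro y hy z hz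
    simp only [Set.mem_setOf_eq] at *
    have hc : ∀ k : ℕ, z * c ^ k = c ^ k * z := fun k =>
      Commute.pow_right hz k
    calc ∑ i : Fin (n+1), a i * (y * z) * c ^ (i:ℕ)
        = ∑ i : Fin (n+1), (a i * y * c ^ (i:ℕ)) * z := by
          refine Finset.sum_congr rfl fun i _ => ?_
          simp [mul_assoc, hc]
      _ = (∑ i : Fin (n+1), a i * y * c ^ (i:ℕ)) * z := by rw [Finset.sum_mul]
      _ = 0 := by rw [hy, zero_mul]
end

section
/- Let R be a division ring, P(x) ∈ R[x] a polynomial, and c ∈ R an element not in the center of R with P(c) ≠ 0. Then there are infinitely many elements d in the conjugacy class [c] = {qcq⁻¹ : q ∈ R, q ≠ 0} with P(d) ≠ 0. -/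
open Polynomial

namespace Stmt8Aux

variable {R : Type*} [DivisionRing R]

/-- The additive map `q ↦ ∑ aᵢ q cⁱ` associated to `P(x) = ∑ aᵢ xⁱ`. -/
noncomputable def lam (P : R[X]) (c q : R) : R := ∑ i ∈ P.support, P.coeff i * q * c ^ i

lemma lam_add (P : R[X]) (c q q' : R) :
    lam P c (q + q') = lam P c q + lam P c q' := by
  simp [lam, mul_add, add_mul, Finset.sum_add_distrib]

lemma lam_zero (P : R[X]) (c : R) : lam P c 0 = 0 := by
  simp [lam]

lemma lam_mul (P : R[X]) {c s : R} (hs : s * c = c * s) (q : R) :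
    lam P c (q * s) = lam P c q * s := by
  rw [lam, lam, Finset.sum_mul]
  refine Finset.sum_congr rfl fun i _ => ?_
  have hpow : s * c ^ i = c ^ i * s := ((show Commute s c from hs).pow_right i).eq
  rw [← mul_assoc, mul_assoc (P.coeff i * q) s (c ^ i), hpow, ← mul_assoc]

lemma conj_pow {q : R} (hq : q ≠ 0) (c : R) (i : ℕ) :
    (q * c * q⁻¹) ^ i = q * c ^ i * q⁻¹ := by
  induction i with
  | zero => simp [mul_inv_cancel₀ hq]
  | succ n ih =>
      rw [pow_succ, ih, pow_succ]
      rw [mul_assoc (q * c ^ n) q⁻¹, ← mul_assoc q⁻¹ (q * c) q⁻¹, ← mul_assoc q⁻¹ q c,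
        inv_mul_cancel₀ hq, one_mul]
      rw [← mul_assoc, ← mul_assoc]

lemma lam_eq_eval_mul (P : R[X]) {c q : R} (hq : q ≠ 0) :
    lam P c q = P.eval (q * c * q⁻¹) * q := by
  rw [eval_eq_sum, Polynomial.sum_def, Finset.sum_mul, lam]
  refine Finset.sum_congr rfl fun i _ => ?_
  rw [conj_pow hq, ← mul_assoc, mul_assoc (P.coeff i * (q * c ^ i)) q⁻¹ q,
    inv_mul_cancel₀ hq, mul_one, ← mul_assoc]

lemma lam_one (P : R[X]) (c : R) : lam P c 1 = P.eval c := by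
  have := lam_eq_eval_mul P (c := c) (q := (1 : R)) one_ne_zero
  simpa using this

/-- One-dimensionality of the "line" `{x | x c = d x}` over the centralizer. -/
lemma line_div {c d x y : R} (hy : y ≠ 0) (hx : x * c = d * x) (hyd : y * c = d * y) :
    ∃ z, z * c = c * z ∧ x = y * z := by
  refine ⟨y⁻¹ * x, ?_, by rw [← mul_assoc, mul_inv_cancel₀ hy, one_mul]⟩
  have hcy : c * y⁻¹ = y⁻¹ * d := by
    have h1 : y⁻¹ * (y * c) * y⁻¹ = y⁻¹ * (d * y) * y⁻¹ := by rw [hyd]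
    rw [← mul_assoc y⁻¹ y c, inv_mul_cancel₀ hy, one_mul, ← mul_assoc y⁻¹ d y,
      mul_assoc (y⁻¹ * d) y y⁻¹, mul_inv_cancel₀ hy, mul_one] at h1
    exact h1
  rw [mul_assoc, hx, ← mul_assoc, ← mul_assoc, hcy]

end Stmt8Aux

open Stmt8Aux

/-- If `c` is not central and `P(c) ≠ 0`, then infinitely many elements of the conjugacy
class of `c` are not right roots of `P`. -/
theorem stmt8 {R : Type*} [DivisionRing R] (P : R[X]) (c : R)
    (hc : c ∉ Subring.center R) (hP : P.eval c ≠ 0) :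
    {d : R | (∃ q : R, q ≠ 0 ∧ d = q * c * q⁻¹) ∧ P.eval d ≠ 0}.Infinite := by
  by_contra hfin
  rw [Set.not_infinite] at hfin
  set S : Set R := {d : R | (∃ q : R, q ≠ 0 ∧ d = q * c * q⁻¹) ∧ P.eval d ≠ 0} with hS
  -- the centralizer of `c` (as a set)
  set Cs : Set R := {x : R | x * c = c * x} with hCs
  have hCsub : ∀ a ∈ Cs, ∀ b ∈ Cs, a - b ∈ Cs := by
    intro a ha b hb
    simp only [hCs, Set.mem_setOf_eq] at *
    rw [sub_mul, mul_sub, ha, hb]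
  have hCneg : ∀ a ∈ Cs, -a ∈ Cs := by
    intro a ha
    simp only [hCs, Set.mem_setOf_eq] at *
    rw [neg_mul, mul_neg, ha]
  have hCmul : ∀ a ∈ Cs, ∀ b ∈ Cs, a * b ∈ Cs := by
    intro a ha b hb
    simp only [hCs, Set.mem_setOf_eq] at *
    rw [mul_assoc, hb, ← mul_assoc, ha, mul_assoc]
  have hCinv : ∀ a ∈ Cs, a⁻¹ ∈ Cs := by
    intro a ha
    rcases eq_or_ne a 0 with rfl | ha0
    · simp only [hCs, Set.mem_setOf_eq, inv_zero, zero_mul, mul_zero]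
    simp only [hCs, Set.mem_setOf_eq] at *
    have h1 : a⁻¹ * (a * c) * a⁻¹ = a⁻¹ * (c * a) * a⁻¹ := by rw [ha]
    rw [← mul_assoc a⁻¹ a c, inv_mul_cancel₀ ha0, one_mul, ← mul_assoc a⁻¹ c a,
      mul_assoc (a⁻¹ * c) a a⁻¹, mul_inv_cancel₀ ha0, mul_one] at h1
    exact h1.symm
  -- an element not commuting with c
  obtain ⟨u, hu⟩ : ∃ u : R, u * c ≠ c * u := by
    by_contra h
    push_neg at h
    exact hc (Subring.mem_center_iff.mpr h)
  have huC : u ∉ Cs := hu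
  -- kernel of lam
  set V : Set R := {x : R | lam P c x = 0} with hV
  have h1V : (1 : R) ∉ V := by
    simp only [hV, Set.mem_setOf_eq, lam_one]
    exact hP
  have h0V : (0 : R) ∈ V := by simp [hV, lam_zero]
  have hVsub : ∀ a ∈ V, ∀ b ∈ V, a - b ∈ V := by
    intro a ha b hb
    simp only [hV, Set.mem_setOf_eq] at *
    have h := lam_add P c (a - b) b
    rw [sub_add_cancel, ha, hb, add_zero] at h
    exact h.symm
  have hVmul : ∀ a ∈ V, ∀ s ∈ Cs, a * s ∈ V := by
    intro a ha s hs
    simp only [hV, Set.mem_setOf_eq] at *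
    rw [lam_mul P hs, ha, zero_mul]
  -- the covering property
  have cover : ∀ x : R, x ∉ V → x ≠ 0 →
      (x * c * x⁻¹ ∈ S ∧ x * c = (x * c * x⁻¹) * x) := by
    intro x hxV hx0
    have heq : x * c = (x * c * x⁻¹) * x := by
      rw [mul_assoc (x * c) x⁻¹ x, inv_mul_cancel₀ hx0, mul_one]
    refine ⟨⟨⟨x, hx0, rfl⟩, ?_⟩, heq⟩
    intro h0
    apply hxV
    simp only [hV, Set.mem_setOf_eq]
    rw [lam_eq_eval_mul P hx0, h0, zero_mul]
  by_cases hCfin : Cs.Finite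
  · -- centralizer finite: each line is finite, so the complement of V is finite
    have hLfin : ∀ d : R, {x : R | x * c = d * x}.Finite := by
      intro d
      by_cases hex : ∃ y, y * c = d * y ∧ y ≠ 0
      · obtain ⟨y, hyd, hy0⟩ := hex
        have hsub : {x : R | x * c = d * x} ⊆ (fun z => y * z) '' Cs := by
          intro x hx
          obtain ⟨z, hz, hxz⟩ := line_div hy0 hx hyd
          exact ⟨z, hz, hxz.symm⟩
        exact (hCfin.image _).subset hsub
      · push_neg at hex
        have hsub : {x : R | x * c = d * x} ⊆ {0} := by
          intro x hx
          by_contra hx0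
          exact hx0 (hex x hx)
        exact (Set.finite_singleton 0).subset hsub
    have hVcfin : Vᶜ.Finite := by
      have hsub : Vᶜ ⊆ ⋃ d ∈ S, {x : R | x * c = d * x} := by
        intro x hx
        have hxV : x ∉ V := hx
        have hx0 : x ≠ 0 := fun h => hxV (h ▸ h0V)
        obtain ⟨hdS, heq⟩ := cover x hxV hx0
        exact Set.mem_biUnion hdS heq
      exact (hfin.biUnion fun d _ => hLfin d).subset hsub
    by_cases hVfin : V.Finite
    · -- then R is finite, hence a field by Wedderburn, contradicting non-centrality
      have hUniv : (Set.univ : Set R).Finite := by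
        have : (Set.univ : Set R) ⊆ V ∪ Vᶜ := by
          intro x _
          by_cases h : x ∈ V
          · exact Or.inl h
          · exact Or.inr h
        exact (hVfin.union hVcfin).subset this
      letI : Finite R := Set.finite_univ_iff.mp hUniv
      letI : Field R := littleWedderburn R
      exact hu (mul_comm u c)
    · -- V infinite: shift V by 1 into the complement of V
      have hVinf : V.Infinite := hVfin
      have hinj : Function.Injective (fun x : R => x + 1) := add_left_injective 1
      have hsub : (fun x : R => x + 1) '' V ⊆ Vᶜ := by
        rintro _ ⟨w, hw, rfl⟩
        intro hw1
        have : (w + 1) - w ∈ V := hVsub _ hw1 _ hw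
        simp only [add_sub_cancel_left] at this
        exact h1V this
      exact (hVinf.image hinj.injOn) (hVcfin.subset hsub)
  · -- centralizer infinite
    have hCinf : Cs.Infinite := hCfin
    -- Step 2: find v ∈ V with v ∉ Cs, v ≠ 0
    set T : Set R := {t : R | t ∈ Cs ∧ u + t ∉ V} with hT
    have hTne : ∀ t ∈ T, u + t ≠ 0 := by
      rintro t ⟨htC, _⟩ h0
      rw [add_eq_zero_iff_eq_neg] at h0
      exact huC (h0 ▸ hCneg t htC)
    have hTf : ∀ t ∈ T, (u + t) * c * (u + t)⁻¹ ∈ S ∧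
        (u + t) * c = ((u + t) * c * (u + t)⁻¹) * (u + t) := by
      rintro t ⟨htC, htV⟩
      exact cover _ htV (hTne t ⟨htC, htV⟩)
    have hTinj : Set.InjOn (fun t => (u + t) * c * (u + t)⁻¹) T := by
      intro t ht t' ht' hdd
      by_contra hne
      set d := (u + t) * c * (u + t)⁻¹ with hd
      have h1 : (u + t) * c = d * (u + t) := (hTf t ht).2
      have hdd' : (u + t) * c * (u + t)⁻¹ = (u + t') * c * (u + t')⁻¹ := hdd
      have h2 : (u + t') * c = d * (u + t') := by
        have := (hTf t' ht').2
        rw [← hdd'] at this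
        exact this
      have h3 : (t - t') * c = d * (t - t') := by
        have : ((u + t) - (u + t')) * c = d * ((u + t) - (u + t')) := by
          rw [sub_mul, mul_sub, h1, h2]
        simpa [add_sub_add_left_eq_sub] using this
      have htt' : t - t' ∈ Cs := hCsub t ht.1 t' ht'.1
      have htt'0 : t - t' ≠ 0 := sub_ne_zero.mpr hne
      have hdc : d = c := by
        have : d * (t - t') = c * (t - t') := by rw [← h3]; exact htt'
        exact mul_right_cancel₀ htt'0 this
      rw [hdc] at h1
      -- u + t commutes with c, t commutes with c, so u commutes with c
      have : u * c = c * u := by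
        have h4 : u * c + t * c = c * u + c * t := by
          rw [← add_mul, ← mul_add]; exact h1
        have h5 : t * c = c * t := ht.1
        have := h4
        rw [h5] at this
        exact add_right_cancel this
      exact hu this
    have hTfin : T.Finite := by
      apply Set.Finite.of_finite_image _ hTinj
      apply hfin.subset
      rintro _ ⟨t, ht, rfl⟩
      exact (hTf t ht).1
    obtain ⟨t, htC, htT⟩ : ∃ t, t ∈ Cs ∧ t ∉ T := by
      obtain ⟨t, ht⟩ := (hCinf.diff hTfin).nonempty
      exact ⟨t, ht.1, ht.2⟩
    have hvV : u + t ∈ V := by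
      by_contra h
      exact htT ⟨htC, h⟩
    set v : R := u + t with hv
    have hv0 : v ≠ 0 := by
      intro h0
      rw [hv, add_eq_zero_iff_eq_neg] at h0
      exact huC (h0 ▸ hCneg t htC)
    have hvC : v ∉ Cs := by
      intro hvc
      have : v - t ∈ Cs := hCsub v hvc t htC
      simp only [hv, add_sub_cancel_right] at this
      exact huC this
    -- Step 3: the map s ↦ (1 + v s) c (1 + v s)⁻¹ is injective on Cs into S
    have hxsV : ∀ s ∈ Cs, (1 : R) + v * s ∉ V := by
      intro s hs h1
      have hvs : v * s ∈ V := hVmul v hvV s hs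
      have : (1 + v * s) - v * s ∈ V := hVsub _ h1 _ hvs
      simp only [add_sub_cancel_right] at this
      exact h1V this
    have hxs0 : ∀ s ∈ Cs, (1 : R) + v * s ≠ 0 := by
      intro s hs h0
      rcases eq_or_ne s 0 with rfl | hs0
      · simp at h0
      · have hvs : v * s = -1 := by
          have h1 : v * s = (1 + v * s) - 1 := (add_sub_cancel_left 1 (v * s)).symm
          rw [h0] at h1
          simpa using h1
        have : v = -s⁻¹ := by
          have : v * s * s⁻¹ = -1 * s⁻¹ := by rw [hvs]
          rwa [mul_assoc, mul_inv_cancel₀ hs0, mul_one, neg_one_mul] at this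
        exact hvC (this ▸ hCneg _ (hCinv s hs))
    have hgS : ∀ s ∈ Cs, ((1 + v * s) * c * (1 + v * s)⁻¹ ∈ S ∧
        (1 + v * s) * c = ((1 + v * s) * c * (1 + v * s)⁻¹) * (1 + v * s)) := by
      intro s hs
      exact cover _ (hxsV s hs) (hxs0 s hs)
    have hginj : Set.InjOn (fun s => (1 + v * s) * c * (1 + v * s)⁻¹) Cs := by
      intro s hs s' hs' hdd
      by_contra hne
      set d := (1 + v * s) * c * (1 + v * s)⁻¹ with hd
      have h1 : (1 + v * s) * c = d * (1 + v * s) := (hgS s hs).2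
      have hdd' : (1 + v * s) * c * (1 + v * s)⁻¹ = (1 + v * s') * c * (1 + v * s')⁻¹ := hdd
      have h2 : (1 + v * s') * c = d * (1 + v * s') := by
        have := (hgS s' hs').2
        rw [← hdd'] at this
        exact this
      have hss0 : s - s' ≠ 0 := sub_ne_zero.mpr hne
      have hy0 : v * (s - s') ≠ 0 := mul_ne_zero hv0 hss0
      have hy : (v * (s - s')) * c = d * (v * (s - s')) := by
        have : ((1 + v * s) - (1 + v * s')) * c = d * ((1 + v * s) - (1 + v * s')) := by
          rw [sub_mul, mul_sub, h1, h2]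
        have heq : (1 + v * s) - (1 + v * s') = v * (s - s') := by
          rw [add_sub_add_left_eq_sub, ← mul_sub]
        rwa [heq] at this
      obtain ⟨z, hzC, hxz⟩ := line_div hy0 h1 hy
      -- 1 + v s = v (s - s') z, so 1 = v ((s - s') z - s)
      have hone : v * ((s - s') * z - s) = 1 := by
        rw [mul_sub, ← mul_assoc, ← hxz, add_sub_cancel_right]
      have hw : (s - s') * z - s ∈ Cs :=
        hCsub _ (hCmul _ (hCsub s hs s' hs') z hzC) s hs
      have hw0 : (s - s') * z - s ≠ 0 := by
        intro h0
        rw [h0, mul_zero] at hone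
        exact zero_ne_one hone
      have hvw : v = ((s - s') * z - s)⁻¹ := by
        have : v * ((s - s') * z - s) * ((s - s') * z - s)⁻¹
            = 1 * ((s - s') * z - s)⁻¹ := by rw [hone]
        rwa [mul_assoc, mul_inv_cancel₀ hw0, mul_one, one_mul] at this
      exact hvC (hvw ▸ hCinv _ hw)
    have : Cs.Finite := by
      apply Set.Finite.of_finite_image _ hginj
      apply hfin.subset
      rintro _ ⟨s, hs, rfl⟩
      exact (hgS s hs).1
    exact hCfin this
end

section
/- (Herstein) In a division ring R, the conjugacy class [c] = {qcq⁻¹ : q ∈ R*} of any element c not lying in the center of R is infinite. -/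
private lemma conj_eq_aux {R : Type*} [DivisionRing R] {a c d : R} (ha : a ≠ 0)
    (h : a * c * a⁻¹ = d) : a * c = d * a := by
  rw [← h, mul_assoc, inv_mul_cancel₀ ha, mul_one]

/-- (Herstein) The conjugacy class of a non-central element of a division ring is infinite. -/
theorem stmt9 {R : Type*} [DivisionRing R] (c : R) (hc : c ∉ Subring.center R) :
    {d : R | ∃ q : R, q ≠ 0 ∧ d = q * c * q⁻¹}.Infinite := by
  set S := {d : R | ∃ q : R, q ≠ 0 ∧ d = q * c * q⁻¹} with hSdef
  obtain ⟨u, hu⟩ : ∃ u : R, u * c ≠ c * u := by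
    by_contra h
    push_neg at h
    exact hc (Subring.mem_center_iff.mpr h)
  by_contra hS
  rw [Set.not_infinite] at hS
  set K := {x : R | x * c = c * x} with hK
  have hKinf : K.Infinite := by
    by_contra hKfin
    rw [Set.not_infinite] at hKfin
    have h1 : ({q : R | q ≠ 0}).Finite := by
      have hsub : {q : R | q ≠ 0} ⊆ ⋃ d ∈ S, {q : R | q ≠ 0 ∧ q * c * q⁻¹ = d} := by
        intro q hq
        simp only [Set.mem_iUnion, Set.mem_setOf_eq]
        exact ⟨q * c * q⁻¹, ⟨q, hq, rfl⟩, hq, rfl⟩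
      refine Set.Finite.subset (Set.Finite.biUnion hS fun d _ => ?_) hsub
      rcases Set.eq_empty_or_nonempty {q : R | q ≠ 0 ∧ q * c * q⁻¹ = d} with he | ⟨q₀, hq₀, hq₀d⟩
      · simp [he]
      · refine Set.Finite.subset (hKfin.image (fun x => q₀ * x)) ?_
        rintro q ⟨hq, hqd⟩
        refine ⟨q₀⁻¹ * q, ?_, by show q₀ * (q₀⁻¹ * q) = q; rw [← mul_assoc, mul_inv_cancel₀ hq₀, one_mul]⟩
        have h1 : q * c = d * q := conj_eq_aux hq hqd
        have h2 : q₀ * c = d * q₀ := conj_eq_aux hq₀ hq₀d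
        have h3 : q₀⁻¹ * d = c * q₀⁻¹ := by
          calc q₀⁻¹ * d = q₀⁻¹ * d * (q₀ * q₀⁻¹) := by rw [mul_inv_cancel₀ hq₀, mul_one]
            _ = q₀⁻¹ * (d * q₀) * q₀⁻¹ := by simp [mul_assoc]
            _ = q₀⁻¹ * (q₀ * c) * q₀⁻¹ := by rw [← h2]
            _ = c * q₀⁻¹ := by rw [← mul_assoc, inv_mul_cancel₀ hq₀, one_mul]
        show q₀⁻¹ * q * c = c * (q₀⁻¹ * q)
        rw [mul_assoc, h1, ← mul_assoc, h3, mul_assoc]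
    have : (Set.univ : Set R).Finite := by
      refine Set.Finite.subset ((Set.finite_singleton (0 : R)).union h1) ?_
      intro x _
      by_cases hx : x = 0 <;> simp [hx]
    haveI : Finite R := Set.finite_univ_iff.mp this
    letI : Field R := littleWedderburn R
    exact hc (Subring.mem_center_iff.mpr fun g => mul_comm g c)
  -- main argument
  have hdom : (K \ {-u}).Infinite := hKinf.diff (Set.finite_singleton _)
  refine absurd (Set.infinite_of_injOn_mapsTo (f := fun l => (u + l) * c * (u + l)⁻¹)
    ?_ ?_ hdom) (by rwa [Set.not_infinite])
  · rintro l ⟨hl, hl'⟩ m ⟨hm, hm'⟩ heq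
    by_contra hne
    have hul : u + l ≠ 0 := by
      intro h; exact hl' (by simp [eq_neg_of_add_eq_zero_right h])
    have hum : u + m ≠ 0 := by
      intro h; exact hm' (by simp [eq_neg_of_add_eq_zero_right h])
    set d := (u + l) * c * (u + l)⁻¹ with hd
    have h1 : (u + l) * c = d * (u + l) := conj_eq_aux hul rfl
    have h2 : (u + m) * c = d * (u + m) := conj_eq_aux hum heq.symm
    have h3 : (l - m) * c = d * (l - m) := by
      have h' : (u + l) * c - (u + m) * c = d * (u + l) - d * (u + m) := by rw [h1, h2]
      rw [← sub_mul, ← mul_sub] at h'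
      simpa using h'
    have hlm : l - m ≠ 0 := sub_ne_zero_of_ne hne
    have h4 : c * (l - m) = d * (l - m) := by
      rw [← h3, sub_mul, mul_sub, hl, hm]
    have h5 : c = d := mul_right_cancel₀ hlm h4
    rw [← h5] at h1
    apply hu
    have : u * c + l * c = c * u + c * l := by
      rw [← add_mul, ← mul_add]; exact h1
    rw [hl] at this
    exact add_right_cancel this
  · rintro l ⟨hl, hl'⟩
    have hul : u + l ≠ 0 := by
      intro h; exact hl' (by simp [eq_neg_of_add_eq_zero_right h])
    exact ⟨u + l, hul, rfl⟩
end

section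
/- (Gordon–Motzkin) Let R be a division ring and P(x) ∈ R[x] a nonzero polynomial of degree n. Then the right roots of P(x) lie in at most n distinct conjugacy classes of R. -/
open Polynomial

/-- Right division by `X - C a`: any polynomial can be written as
`q * (X - C a) + C (p.eval a)` (noncommutative coefficients, right evaluation). -/
lemma gm_right_div {R : Type*} [Ring R] (p : R[X]) (a : R) :
    ∃ q : R[X], p = q * (X - C a) + C (p.eval a) := by
  induction p using Polynomial.induction_on' with
  | add p r hp hr =>
    obtain ⟨q1, h1⟩ := hp
    obtain ⟨q2, h2⟩ := hr
    refine ⟨q1 + q2, ?_⟩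
    rw [eval_add, C_add]
    conv_lhs => rw [h1, h2]
    noncomm_ring
  | monomial n b =>
    refine ⟨C b * (∑ i ∈ Finset.range n, X ^ i * (C a) ^ (n - 1 - i)), ?_⟩
    have hg := (commute_X (C a)).geom_sum₂_mul n
    rw [eval_monomial, ← C_mul_X_pow_eq_monomial, mul_assoc, hg, C_mul, C_pow]
    noncomm_ring

lemma gm_conj_pow {R : Type*} [DivisionRing R] {s : R} (hs0 : s ≠ 0) (b : R) (n : ℕ) :
    (s * b * s⁻¹) ^ n = s * b ^ n * s⁻¹ := by
  induction n with
  | zero => simp [mul_inv_cancel₀ hs0]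
  | succ k ih =>
    rw [pow_succ, ih, pow_succ]
    simp [mul_assoc, inv_mul_cancel_left₀ hs0]

/-- Key evaluation formula: evaluating `q * (X - C a)` at `b ≠ a` equals
`q` evaluated at the conjugate `(b-a) * b * (b-a)⁻¹`, times `(b-a)`. -/
lemma gm_eval_mul {R : Type*} [DivisionRing R] (q : R[X]) (a b : R) (hba : b ≠ a) :
    (q * (X - C a)).eval b = q.eval ((b - a) * b * (b - a)⁻¹) * (b - a) := by
  have hs0 : b - a ≠ 0 := sub_ne_zero.mpr hba
  induction q using Polynomial.induction_on' with
  | add p r hp hr =>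
    rw [add_mul, eval_add, hp, hr, eval_add, add_mul]
  | monomial n c =>
    have hX : (X : R[X]) ^ n * (X - C a) = X ^ (n + 1) - C a * X ^ n := by
      rw [mul_sub, ← pow_succ, ((commute_X (C a)).pow_left n).eq]
    rw [← C_mul_X_pow_eq_monomial, mul_assoc, eval_C_mul, eval_C_mul, hX]
    simp only [eval_sub, X_pow_eq_monomial, eval_monomial, one_mul, eval_C_mul, gm_conj_pow hs0]
    have key : (b - a) * b ^ n * (b - a)⁻¹ * (b - a) = (b - a) * b ^ n := by
      rw [mul_assoc, inv_mul_cancel₀ hs0, mul_one]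
    rw [mul_assoc c ((b - a) * b ^ n * (b - a)⁻¹) (b - a), key, pow_succ']
    noncomm_ring

lemma gm_aux {R : Type*} [DivisionRing R] (n : ℕ) :
    ∀ P : R[X], P ≠ 0 → P.natDegree ≤ n →
      ∃ s : Finset R, s.card ≤ P.natDegree ∧
        ∀ a : R, P.eval a = 0 → ∃ b ∈ s, ∃ q : R, q ≠ 0 ∧ a = q * b * q⁻¹ := by
  induction n with
  | zero =>
    intro P hP hdeg
    refine ⟨∅, by simp, fun a ha => absurd ?_ hP⟩
    have := Polynomial.eq_C_of_natDegree_eq_zero (Nat.le_zero.mp hdeg)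
    rw [this] at ha ⊢
    rw [eval_C] at ha
    rw [ha, map_zero]
  | succ n ih =>
    intro P hP hdeg
    by_cases h : ∃ a : R, P.eval a = 0
    · obtain ⟨a, ha⟩ := h
      obtain ⟨Q, hQ⟩ := gm_right_div P a
      rw [ha, map_zero, add_zero] at hQ
      have hQ0 : Q ≠ 0 := by rintro rfl; rw [zero_mul] at hQ; exact hP hQ
      have hdP : P.natDegree = Q.natDegree + 1 := by
        rw [hQ, natDegree_mul hQ0 (X_sub_C_ne_zero a), natDegree_X_sub_C]
      obtain ⟨s, hs, hcov⟩ := ih Q hQ0 (by omega)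
      classical
      have hcard : (insert a s).card ≤ P.natDegree := by
        have := Finset.card_insert_le a s
        omega
      refine ⟨insert a s, hcard, fun b hb => ?_⟩
      by_cases hba : b = a
      · exact ⟨a, Finset.mem_insert_self a s, 1, one_ne_zero, by simp [hba]⟩
      · have hs0 : b - a ≠ 0 := sub_ne_zero.mpr hba
        have hev : Q.eval ((b - a) * b * (b - a)⁻¹) = 0 := by
          have := gm_eval_mul Q a b hba
          rw [← hQ, hb] at this
          exact (mul_eq_zero.mp this.symm).resolve_right hs0
        obtain ⟨d, hd, q, hq0, hcq⟩ := hcov _ hev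
        refine ⟨d, Finset.mem_insert_of_mem hd, (b - a)⁻¹ * q,
          mul_ne_zero (inv_ne_zero hs0) hq0, ?_⟩
        rw [mul_inv_rev, inv_inv]
        have hb' : b = (b - a)⁻¹ * ((b - a) * b * (b - a)⁻¹) * (b - a) := by
          rw [mul_assoc (b - a) b (b - a)⁻¹, inv_mul_cancel_left₀ hs0, mul_assoc,
            inv_mul_cancel₀ hs0, mul_one]
        rw [hcq] at hb'
        conv_lhs => rw [hb']
        noncomm_ring
    · push_neg at h
      exact ⟨∅, by simp, fun a ha => absurd ha (h a)⟩

/-- (Gordon–Motzkin) The right roots of a nonzero polynomial of degree `n` over a division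
ring lie in at most `n` conjugacy classes. -/
theorem stmt10 {R : Type*} [DivisionRing R] (P : R[X]) (hP : P ≠ 0) :
    ∃ s : Finset R, s.card ≤ P.natDegree ∧
      ∀ a : R, P.eval a = 0 → ∃ b ∈ s, ∃ q : R, q ≠ 0 ∧ a = q * b * q⁻¹ := by
  exact gm_aux P.natDegree P hP le_rfl
end

section
/- Let Q be a quaternion division algebra over a field F (a 4-dimensional central division algebra over F) and let B be a conjugacy class of a non-central element of Q, with minimal polynomial λ(x) ∈ F[x] (of degree 2) over F. If P(x) ∈ Q[x] has two distinct right roots in B, then λ(x) right-divides P(x) in Q[x] and every element of B is a right root of P(x). -/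
open Polynomial

section Aux

variable {F Q : Type*} [Field F] [DivisionRing Q] [Algebra F Q]

/-- Mapped polynomials from the base field commute with everything. -/
lemma stmt12_commute_map (f : F[X]) (p : Q[X]) :
    Commute (f.map (algebraMap F Q)) p := by
  induction f using Polynomial.induction_on with
  | C c =>
      rw [Polynomial.map_C]
      show _ = _
      ext n
      simp [Polynomial.coeff_C_mul, Polynomial.coeff_mul_C, Algebra.commutes]
  | add f g hf hg =>
      rw [Polynomial.map_add]; exact hf.add_left hg
  | monomial n c hf =>
      have hX : Commute (X : Q[X]) p := Polynomial.commute_X p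
      rw [pow_succ, ← mul_assoc, Polynomial.map_mul, Polynomial.map_X]
      exact Commute.mul_left hf hX

/-- Conjugation by a nonzero element as an `F`-algebra homomorphism. -/
noncomputable def stmt12_conj (q : Q) (hq : q ≠ 0) : Q →ₐ[F] Q where
  toFun z := q * z * q⁻¹
  map_one' := by
    show q * 1 * q⁻¹ = 1
    rw [mul_one, mul_inv_cancel₀ hq]
  map_mul' x y := by
    show q * (x * y) * q⁻¹ = q * x * q⁻¹ * (q * y * q⁻¹)
    simp only [mul_assoc, inv_mul_cancel_left₀ hq]
  map_zero' := by
    show q * 0 * q⁻¹ = 0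
    simp
  map_add' x y := by
    show q * (x + y) * q⁻¹ = q * x * q⁻¹ + q * y * q⁻¹
    rw [mul_add, add_mul]
  commutes' r := by
    show q * algebraMap F Q r * q⁻¹ = algebraMap F Q r
    have h : q * algebraMap F Q r = algebraMap F Q r * q := (Algebra.commutes r q).symm
    rw [h, mul_assoc, mul_inv_cancel₀ hq, mul_one]

variable [FiniteDimensional F Q]

/-- The minimal polynomial of a non-central element has degree at most 2. -/
lemma stmt12_natDegree_le (hdim : Module.finrank F Q = 4)
    (hcent : ∀ z : Q, (∀ w : Q, z * w = w * z) → ∃ r : F, z = algebraMap F Q r)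
    (a : Q) (ha : ¬∃ r : F, a = algebraMap F Q r) :
    (minpoly F a).natDegree ≤ 2 := by
  set K : Subalgebra F Q := Algebra.adjoin F {a} with hK
  letI : CommRing ↥K := Algebra.adjoinCommRingOfComm F (by
    rintro x hx y hy
    rcases Set.mem_singleton_iff.mp hx with rfl
    rcases Set.mem_singleton_iff.mp hy with rfl
    rfl)
  have hfield : IsField ↥K := by
    refine ⟨⟨0, 1, fun h => ?_⟩, mul_comm, ?_⟩
    · have := congrArg Subtype.val h
      simpa using this
    · intro x hx
      have hx0 : (x : Q) ≠ 0 := by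
        intro h0; exact hx (Subtype.ext h0)
      refine ⟨⟨(x : Q)⁻¹, (IsIntegral.of_finite F (x : Q)).inv_mem x.2⟩, ?_⟩
      exact Subtype.ext (by simpa using mul_inv_cancel₀ hx0)
  letI : Field ↥K := hfield.toField
  have hmem : a ∈ K := Algebra.self_mem_adjoin_singleton F a
  have hmp : minpoly F a = minpoly F (⟨a, hmem⟩ : ↥K) := by
    have := minpoly.algHom_eq K.val Subtype.val_injective (⟨a, hmem⟩ : ↥K)
    simp only [Subalgebra.coe_val] at this
    exact this
  have htower : Module.finrank F ↥K * Module.finrank ↥K Q = 4 := by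
    rw [Module.finrank_mul_finrank]; exact hdim
  have hn1 : Module.finrank ↥K Q ≠ 1 := by
    intro h1
    have hone : (1 : Q) ≠ 0 := one_ne_zero
    have hspan := (finrank_eq_one_iff_of_nonzero (1 : Q) hone).mp h1
    have hall : ∀ w : Q, a * w = w * a := by
      intro w
      have hw : w ∈ Submodule.span ↥K {(1 : Q)} := hspan ▸ Submodule.mem_top
      rcases Submodule.mem_span_singleton.mp hw with ⟨c, hc⟩
      have hw' : w = (c : Q) := by
        rw [← hc]; show (c : Q) * 1 = (c : Q); rw [mul_one]
      rw [hw']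
      exact (Algebra.commute_of_mem_adjoin_self c.2)
    exact absurd (hcent a hall) ha
  have hn0 : Module.finrank ↥K Q ≠ 0 := by
    intro h0; rw [h0, mul_zero] at htower; exact (by norm_num : (0 : ℕ) ≠ 4) htower
  have hle4 : Module.finrank F ↥K ≤ 4 := by
    nlinarith [Nat.one_le_iff_ne_zero.mpr hn0, htower]
  have hfr : Module.finrank F ↥K ≤ 2 := by
    interval_cases h : Module.finrank F ↥K <;> omega
  calc (minpoly F a).natDegree = (minpoly F (⟨a, hmem⟩ : ↥K)).natDegree := by rw [hmp]
    _ ≤ Module.finrank F ↥K := minpoly.natDegree_le _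
    _ ≤ 2 := hfr

end Aux

/-- Over a quaternion division algebra `Q` (a 4-dimensional central division algebra over
`F`), if `P(x)` has two distinct right roots in the conjugacy class of a non-central `a`,
then the minimal polynomial of `a` over `F` right-divides `P` and every element of the
conjugacy class is a right root of `P`. -/
theorem stmt12 {F Q : Type*} [Field F] [DivisionRing Q] [Algebra F Q]
    [FiniteDimensional F Q] (hdim : Module.finrank F Q = 4)
    (hcent : ∀ z : Q, (∀ w : Q, z * w = w * z) → ∃ r : F, z = algebraMap F Q r)
    (a : Q) (ha : ¬∃ r : F, a = algebraMap F Q r)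
    (P : Q[X]) (r₁ r₂ : Q)
    (h₁ : ∃ q : Q, q ≠ 0 ∧ r₁ = q * a * q⁻¹)
    (h₂ : ∃ q : Q, q ≠ 0 ∧ r₂ = q * a * q⁻¹)
    (hne : r₁ ≠ r₂) (hr₁ : P.eval r₁ = 0) (hr₂ : P.eval r₂ = 0) :
    (∃ G : Q[X], P = G * (minpoly F a).map (algebraMap F Q)) ∧
      ∀ d : Q, (∃ q : Q, q ≠ 0 ∧ d = q * a * q⁻¹) → P.eval d = 0 := by
  have hint : IsIntegral F a := IsIntegral.of_finite F a
  set μ : Q[X] := (minpoly F a).map (algebraMap F Q) with hμ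
  have hmonic : μ.Monic := (minpoly.monic hint).map _
  -- every conjugate of `a` is a root of `μ`
  have hroot : ∀ d : Q, (∃ q : Q, q ≠ 0 ∧ d = q * a * q⁻¹) → μ.eval d = 0 := by
    rintro d ⟨q, hq, rfl⟩
    have : μ.eval (q * a * q⁻¹) = Polynomial.aeval (q * a * q⁻¹) (minpoly F a) := by
      rw [hμ, Polynomial.eval_map, Polynomial.aeval_def]
    rw [this]
    have hc : q * a * q⁻¹ = stmt12_conj (F := F) q hq a := rfl
    rw [hc, Polynomial.aeval_algHom_apply, minpoly.aeval, map_zero]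
  -- evaluation splits across the division by `μ`
  have hcomm : ∀ k : ℕ, ∀ x : Q, Commute ((RingHom.id Q) (μ.coeff k)) x := by
    intro k x
    rw [hμ, Polynomial.coeff_map, RingHom.id_apply]
    exact (Algebra.commutes _ _)
  have hmul : ∀ (g : Q[X]) (x : Q), (g * μ).eval x = g.eval x * μ.eval x := fun g x =>
    Polynomial.eval₂_mul_noncomm (RingHom.id Q) x (fun k => hcomm k x)
  have hkey : ∀ x : Q, P.eval x = (P /ₘ μ).eval x * μ.eval x + (P %ₘ μ).eval x := by
    intro x
    conv_lhs => rw [← Polynomial.modByMonic_add_div P μ]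
    rw [(stmt12_commute_map (minpoly F a) (P /ₘ μ)).eq]
    rw [Polynomial.eval_add, hmul, add_comm]
  -- the remainder has degree ≤ 1
  have hdegμ : μ.degree ≤ 2 := by
    rw [hμ, Polynomial.degree_map_eq_of_injective (algebraMap F Q).injective]
    calc (minpoly F a).degree ≤ ((minpoly F a).natDegree : WithBot ℕ) :=
          Polynomial.degree_le_natDegree
      _ ≤ (2 : ℕ) := by
          exact_mod_cast Nat.cast_le.mpr (stmt12_natDegree_le hdim hcent a ha)
  have hdegR : (P %ₘ μ).degree ≤ 1 := by
    have h2 : (P %ₘ μ).degree < 2 :=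
      lt_of_lt_of_le (Polynomial.degree_modByMonic_lt P hmonic) hdegμ
    cases hdeg : (P %ₘ μ).degree with
    | bot => exact bot_le
    | coe n =>
        rw [hdeg] at h2
        have h2' : (n : WithBot ℕ) < ((2 : ℕ) : WithBot ℕ) := h2
        have hn : n < 2 := WithBot.coe_lt_coe.mp h2'
        exact le_trans (WithBot.coe_le_coe.mpr (Nat.lt_succ_iff.mp hn)) (by norm_num)
  set c₁ : Q := (P %ₘ μ).coeff 1
  set c₀ : Q := (P %ₘ μ).coeff 0
  have hR : P %ₘ μ = C c₁ * X + C c₀ := Polynomial.eq_X_add_C_of_degree_le_one hdegR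
  have hevalR : ∀ x : Q, (P %ₘ μ).eval x = c₁ * x + c₀ := by
    intro x
    rw [hR, Polynomial.eval_add, Polynomial.C_mul_X_eq_monomial, Polynomial.eval_monomial,
      Polynomial.eval_C, pow_one]
  have he₁ : c₁ * r₁ + c₀ = 0 := by
    have := hkey r₁
    rw [hr₁, hroot r₁ h₁, mul_zero, zero_add, hevalR] at this
    exact this.symm
  have he₂ : c₁ * r₂ + c₀ = 0 := by
    have := hkey r₂
    rw [hr₂, hroot r₂ h₂, mul_zero, zero_add, hevalR] at this
    exact this.symm
  have hc₁ : c₁ = 0 := by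
    have hsub : c₁ * (r₁ - r₂) = 0 := by
      rw [mul_sub]
      have : c₁ * r₁ = c₁ * r₂ := by
        have := he₁.trans he₂.symm
        exact add_right_cancel this
      rw [this, sub_self]
    rcases mul_eq_zero.mp hsub with h | h
    · exact h
    · exact absurd (sub_eq_zero.mp h) hne
  have hc₀ : c₀ = 0 := by
    have := he₁
    rw [hc₁, zero_mul, zero_add] at this
    exact this
  have hR0 : P %ₘ μ = 0 := by
    rw [hR, hc₁, hc₀]
    simp
  have hPfact : P = (P /ₘ μ) * μ := by
    conv_lhs => rw [← Polynomial.modByMonic_add_div P μ]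
    rw [hR0, zero_add, (stmt12_commute_map (minpoly F a) (P /ₘ μ)).eq]
  refine ⟨⟨P /ₘ μ, hPfact⟩, ?_⟩
  intro d hd
  rw [hkey d, hroot d hd, hR0, mul_zero, zero_add, Polynomial.eval_zero]
end

section
/- Let Q be a quaternion division algebra over F. If P(x) ∈ Q[x] has spherical roots a₁, …, aₙ lying in pairwise distinct conjugacy classes, then P(x) is right-divisible in Q[x] by the product f₁(x)···fₙ(x) of the minimal polynomials fᵢ(x) ∈ F[x] of the aᵢ. -/
open Polynomial

/-- `q` is a spherical root of `P`: `q` is non-central (not in `F`) and every conjugate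
of `q` is a right root of `P`. -/
def IsSphericalRoot (F : Type*) {Q : Type*} [Field F] [DivisionRing Q] [Algebra F Q]
    (P : Q[X]) (q : Q) : Prop :=
  (¬∃ r : F, q = algebraMap F Q r) ∧ ∀ g : Q, g ≠ 0 → P.eval (g * q * g⁻¹) = 0

section Aux

variable {F Q : Type*} [Field F] [DivisionRing Q] [Algebra F Q]

/-- Conjugation by a nonzero element as an `F`-algebra homomorphism. -/
noncomputable def conjHom (g : Q) (hg : g ≠ 0) : Q →ₐ[F] Q where
  toFun x := g * x * g⁻¹
  map_one' := by rw [mul_one, mul_inv_cancel₀ hg]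
  map_mul' x y := by
    have h : g⁻¹ * g = 1 := inv_mul_cancel₀ hg
    calc g * (x * y) * g⁻¹ = g * x * (g⁻¹ * g) * (y * g⁻¹) := by rw [h]; noncomm_ring
    _ = g * x * g⁻¹ * (g * y * g⁻¹) := by noncomm_ring
  map_zero' := by simp
  map_add' x y := by rw [mul_add, add_mul]
  commutes' r := by
    rw [← Algebra.commutes r g, mul_assoc, mul_inv_cancel₀ hg, mul_one]

lemma commute_map_poly (f : F[X]) (g : Q[X]) : Commute (f.map (algebraMap F Q)) g := by
  induction f using Polynomial.induction_on' with
  | add p q hp hq => rw [Polynomial.map_add]; exact hp.add_left hq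
  | monomial n r =>
    rw [Polynomial.map_monomial, ← C_mul_X_pow_eq_monomial]
    have hC : Commute (C (algebraMap F Q r)) g := by
      show _ = _
      ext k
      simp [coeff_C_mul, coeff_mul_C, Algebra.commutes]
    exact hC.mul_left ((commute_X g).pow_left n)

lemma eval_mul_map (g : Q[X]) (f : F[X]) (x : Q) :
    (g * f.map (algebraMap F Q)).eval x
      = g.eval x * (f.map (algebraMap F Q)).eval x := by
  have := eval₂_mul_noncomm (RingHom.id Q) x
    (p := g) (q := f.map (algebraMap F Q)) (fun k => by
      simp only [RingHom.id_apply, coeff_map]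
      exact (Algebra.commutes (f.coeff k) x))
  exact this

lemma noncentral_exists_w
    (hcent : ∀ z : Q, (∀ w : Q, z * w = w * z) → ∃ r : F, z = algebraMap F Q r)
    {a : Q} (ha : ¬∃ r : F, a = algebraMap F Q r) : ∃ w : Q, a * w ≠ w * a := by
  by_contra h
  push_neg at h
  exact ha (hcent a h)

lemma minpoly_natDegree_two [FiniteDimensional F Q] (hdim : Module.finrank F Q = 4)
    (hcent : ∀ z : Q, (∀ w : Q, z * w = w * z) → ∃ r : F, z = algebraMap F Q r)
    {a : Q} (ha : ¬∃ r : F, a = algebraMap F Q r) :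
    (minpoly F a).natDegree = 2 := by
  have hint : IsIntegral F a := IsIntegral.of_finite F a
  have hmonic := minpoly.monic hint
  have h2le : 2 ≤ (minpoly F a).natDegree := by
    by_contra hlt
    push_neg at hlt
    have hpos := minpoly.natDegree_pos hint
    have h1 : (minpoly F a).natDegree = 1 := by omega
    have heq := hmonic.eq_X_add_C h1
    have h0 := minpoly.aeval F a
    rw [heq] at h0
    simp only [map_add, aeval_X, aeval_C] at h0
    exact ha ⟨-((minpoly F a).coeff 0), by
      rw [map_neg, eq_neg_iff_add_eq_zero]; exact h0⟩
  have hle2 : (minpoly F a).natDegree ≤ 2 := by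
    by_contra hgt
    push_neg at hgt
    obtain ⟨w, hw⟩ := noncentral_exists_w hcent ha
    have hcomm_of : ∀ c0 c1 c2 : F, Commute a (c0 • (1:Q) + c1 • a + c2 • (a*a)) :=
      fun c0 c1 c2 =>
        (((Commute.one_right a).smul_right c0).add_right
          ((Commute.refl a).smul_right c1)).add_right
            (((Commute.refl a).mul_right (Commute.refl a)).smul_right c2)
    set v : Fin 4 → Q := ![1, a, a*a, w] with hv
    have hli : LinearIndependent F v := by
      rw [Fintype.linearIndependent_iff]
      intro c hc
      rw [Fin.sum_univ_four] at hc
      simp only [hv, Matrix.cons_val_zero, Matrix.cons_val_one, Matrix.head_cons,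
        Matrix.cons_val_two, Matrix.tail_cons, Matrix.cons_val_three] at hc
      -- hc : c 0 • 1 + c 1 • a + c 2 • (a*a) + c 3 • w = 0
      have hc3 : c 3 = 0 := by
        by_contra h3
        apply hw
        have hsw : c 3 • w = -(c 0 • (1:Q) + c 1 • a + c 2 • (a*a)) := by
          rw [eq_neg_iff_add_eq_zero, add_comm]
          exact hc
        have hwexp : w = (c 3)⁻¹ • -(c 0 • (1:Q) + c 1 • a + c 2 • (a*a)) := by
          rw [← hsw, smul_smul, inv_mul_cancel₀ h3, one_smul]
        rw [hwexp]
        exact (((hcomm_of (c 0) (c 1) (c 2)).neg_right).smul_right ((c 3)⁻¹)).eq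
      rw [hc3, zero_smul, add_zero] at hc
      set p : F[X] := C (c 0) + C (c 1) * X + C (c 2) * X ^ 2 with hp
      have hpa : aeval a p = 0 := by
        rw [hp]
        simp only [map_add, map_mul, aeval_C, aeval_X, map_pow]
        rw [← hc]
        simp [Algebra.smul_def, sq]
      have hp0 : p = 0 := by
        by_contra hne
        have hdle := minpoly.degree_le_of_ne_zero F a hne hpa
        have hdeg : p.degree ≤ 2 := by rw [hp]; compute_degree
        have hfin : (minpoly F a).degree ≤ 2 := le_trans hdle hdeg
        rw [degree_eq_natDegree (minpoly.ne_zero hint)] at hfin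
        exact absurd (by exact_mod_cast hfin) (by omega)
      have e0 : c 0 = 0 := by
        have := congrArg (fun q => Polynomial.coeff q 0) hp0
        simpa [hp] using this
      have e1 : c 1 = 0 := by
        have := congrArg (fun q => Polynomial.coeff q 1) hp0
        simpa [hp, coeff_C] using this
      have e2 : c 2 = 0 := by
        have := congrArg (fun q => Polynomial.coeff q 2) hp0
        simpa [hp, coeff_C] using this
      intro i
      fin_cases i <;> assumption
    have hcard : Fintype.card (Fin 4) = Module.finrank F Q := by simp [hdim]
    set hb := basisOfLinearIndependentOfCardEqFinrank hli hcard with hbdef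
    have hbe : ⇑hb = v := coe_basisOfLinearIndependentOfCardEqFinrank hli hcard
    have hrepr := hb.sum_repr (a * w)
    rw [Fin.sum_univ_four] at hrepr
    simp only [hbe, hv, Matrix.cons_val_zero, Matrix.cons_val_one, Matrix.head_cons,
      Matrix.cons_val_two, Matrix.tail_cons, Matrix.cons_val_three] at hrepr
    set s : Fin 4 → F := fun i => hb.repr (a * w) i with hs
    -- hrepr : s 0 • 1 + s 1 • a + s 2 • (a*a) + s 3 • w = a * w
    have hkey : (a - algebraMap F Q (s 3)) * w
        = s 0 • (1:Q) + s 1 • a + s 2 • (a*a) := by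
      rw [sub_mul, ← Algebra.smul_def, sub_eq_iff_eq_add, ← hrepr]
    have hne : a - algebraMap F Q (s 3) ≠ 0 :=
      sub_ne_zero.mpr (fun h => ha ⟨s 3, h⟩)
    have hwval : w = (a - algebraMap F Q (s 3))⁻¹
        * (s 0 • (1:Q) + s 1 • a + s 2 • (a*a)) := by
      rw [← hkey, ← mul_assoc, inv_mul_cancel₀ hne, one_mul]
    apply hw
    rw [hwval]
    have hcomm1 : Commute a ((a - algebraMap F Q (s 3))⁻¹) :=
      ((Commute.refl a).sub_right (Algebra.commutes (s 3) a).symm).inv_right₀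
    exact (hcomm1.mul_right (hcomm_of (s 0) (s 1) (s 2))).eq
  omega

lemma quad_rel {f : F[X]} (hm : f.Monic) (hd : f.natDegree = 2) {x : Q}
    (hx : aeval x f = 0) :
    x * x + algebraMap F Q (f.coeff 1) * x + algebraMap F Q (f.coeff 0) = 0 := by
  have h := aeval_eq_sum_range (x := x) (p := f)
  rw [hd, hx] at h
  have hc2 : f.coeff 2 = 1 := by
    have := hm.coeff_natDegree
    rwa [hd] at this
  simp only [Finset.sum_range_succ, Finset.sum_range_zero, zero_add, hc2, one_smul,
    Algebra.smul_def, pow_zero, pow_one, mul_one, sq] at h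
  rw [map_one, one_mul] at h
  rw [show x * x + (algebraMap F Q) (f.coeff 1) * x + (algebraMap F Q) (f.coeff 0)
    = (algebraMap F Q) (f.coeff 0) + (algebraMap F Q) (f.coeff 1) * x + x * x from by abel, ← h]

lemma conj_of_quad
    (hcent : ∀ z : Q, (∀ w : Q, z * w = w * z) → ∃ r : F, z = algebraMap F Q r)
    {a b : Q} (ha : ¬∃ r : F, a = algebraMap F Q r) {t n : F}
    (h1 : a * a + algebraMap F Q t * a + algebraMap F Q n = 0)
    (h2 : b * b + algebraMap F Q t * b + algebraMap F Q n = 0) :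
    ∃ h : Q, h ≠ 0 ∧ b = h * a * h⁻¹ := by
  set T := algebraMap F Q t with hT
  set N := algebraMap F Q n with hN
  have cT : ∀ x : Q, x * T = T * x := fun x => (Algebra.commutes t x).symm
  have cN : ∀ x : Q, x * N = N * x := fun x => (Algebra.commutes n x).symm
  have ha2 : a * a = -(T * a + N) := by
    apply eq_neg_of_add_eq_zero_left
    rw [← add_assoc]; exact h1
  have hb2 : b * b = -(T * b + N) := by
    apply eq_neg_of_add_eq_zero_left
    rw [← add_assoc]; exact h2
  by_cases hc : a + b + T = 0
  · -- b = -(a + T); conjugation by e = w*a - a*w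
    obtain ⟨w, hw⟩ := noncentral_exists_w hcent ha
    have hb : b = -(a + T) := by
      apply eq_neg_of_add_eq_zero_left
      calc b + (a + T) = a + b + T := by abel
      _ = 0 := hc
    set e := w * a - a * w with hedef
    have he : e ≠ 0 := sub_ne_zero.mpr (fun h => hw h.symm)
    have key : a * e = e * b := by
      have step1 : a * e - e * b
          = w * (a*a) - (a*a) * w + (w*a) * T - (a*w) * T := by
        rw [hedef, hb]; noncomm_ring
      rw [cT (w*a), cT (a*w), ha2] at step1
      have e1 : w * (T * a) = T * (w * a) := by
        rw [← mul_assoc, cT w, mul_assoc]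
      have final : w * -(T * a + N) - -(T * a + N) * w + T * (w * a) - T * (a * w) = 0 := by
        rw [mul_neg, neg_mul, mul_add, add_mul, e1, cN w, mul_assoc]
        abel
      rw [final] at step1
      exact sub_eq_zero.mp step1
    refine ⟨e⁻¹, inv_ne_zero he, ?_⟩
    rw [inv_inv, mul_assoc, key, ← mul_assoc, inv_mul_cancel₀ he, one_mul]
  · set c := a + b + T with hcdef
    have key : a * c = c * b := by
      have step1 : a * c - c * b = a*a - b*b + a*T - T*b := by
        rw [hcdef]; noncomm_ring
      rw [cT a, ha2, hb2] at step1
      have final : -(T * a + N) - -(T * b + N) + T * a - T * b = 0 := by abel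
      rw [final] at step1
      exact sub_eq_zero.mp step1
    refine ⟨c⁻¹, inv_ne_zero hc, ?_⟩
    rw [inv_inv, mul_assoc, key, ← mul_assoc, inv_mul_cancel₀ hc, one_mul]

lemma right_div [FiniteDimensional F Q] (hdim : Module.finrank F Q = 4)
    (hcent : ∀ z : Q, (∀ w : Q, z * w = w * z) → ∃ r : F, z = algebraMap F Q r)
    (P : Q[X]) (a : Q) (hsph : IsSphericalRoot F P a) :
    P = (P /ₘ ((minpoly F a).map (algebraMap F Q))) * (minpoly F a).map (algebraMap F Q) := by
  have hint : IsIntegral F a := IsIntegral.of_finite F a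
  set f := minpoly F a with hf
  set fm := f.map (algebraMap F Q) with hfm
  have hmon : fm.Monic := (minpoly.monic hint).map _
  have hdiv := modByMonic_add_div P fm
  have hcomm := commute_map_poly f (P /ₘ fm)
  set R := P %ₘ fm with hR
  have hzero : ∀ g : Q, g ≠ 0 → R.eval (g * a * g⁻¹) = 0 := by
    intro g hg
    have hP := hsph.2 g hg
    have hfq : fm.eval (g * a * g⁻¹) = 0 := by
      have hcj : aeval (conjHom (F := F) g hg a) f = conjHom (F := F) g hg (aeval a f) :=
        aeval_algHom_apply _ _ _
      rw [hf] at hcj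
      rw [minpoly.aeval, map_zero] at hcj
      rw [hfm, eval_map, ← aeval_def]
      exact hcj
    have hPe : P.eval (g*a*g⁻¹)
        = R.eval (g*a*g⁻¹) + (P /ₘ fm).eval (g*a*g⁻¹) * fm.eval (g*a*g⁻¹) := by
      conv_lhs => rw [← hdiv]
      rw [hcomm.eq, eval_add, hfm, eval_mul_map]
    rw [hP, hfq, mul_zero, add_zero] at hPe
    exact hPe.symm
  have hdegR : R.degree < 2 := by
    have h2 := degree_modByMonic_lt P hmon
    have hdf : fm.degree = 2 := by
      have hnd : fm.natDegree = 2 := by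
        rw [hfm, (minpoly.monic hint).natDegree_map]
        exact minpoly_natDegree_two hdim hcent hsph.1
      rw [degree_eq_natDegree hmon.ne_zero, hnd]
      rfl
    rwa [hdf] at h2
  have hR0 : R = 0 := by
    by_contra hne
    have hnd : R.natDegree ≤ 1 := by
      have h2' : R.natDegree < 2 := by
        exact_mod_cast (natDegree_lt_iff_degree_lt hne).mpr hdegR
      omega
    have heq := eq_X_add_C_of_natDegree_le_one hnd
    obtain ⟨w, hw⟩ := noncentral_exists_w hcent hsph.1
    have hw0 : w ≠ 0 := fun h => hw (by rw [h, zero_mul, mul_zero])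
    have h1 := hzero 1 one_ne_zero
    rw [one_mul, inv_one, mul_one] at h1
    have h2 := hzero w hw0
    rw [heq] at h1 h2
    simp only [eval_add, eval_C, eval_C_mul, eval_X] at h1 h2
    -- h1 : R.coeff 1 * a + R.coeff 0 = 0 ; h2 : same at w*a*w⁻¹
    have hqa : a ≠ w * a * w⁻¹ := by
      intro hh
      apply hw
      have : a * w = w * a * w⁻¹ * w := by conv_lhs => rw [hh]
      rwa [mul_assoc, inv_mul_cancel₀ hw0, mul_one] at this
    have hsub : R.coeff 1 * (a - w * a * w⁻¹) = 0 := by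
      rw [mul_sub]
      have e1 : R.coeff 1 * a = -R.coeff 0 := by
        rw [eq_neg_iff_add_eq_zero]; exact h1
      have e2 : R.coeff 1 * (w * a * w⁻¹) = -R.coeff 0 := by
        rw [eq_neg_iff_add_eq_zero]; exact h2
      rw [e1, e2, sub_self]
    have hc1 : R.coeff 1 = 0 := by
      rcases mul_eq_zero.mp hsub with h | h
      · exact h
      · exact absurd (sub_eq_zero.mp h) hqa
    have hc0 : R.coeff 0 = 0 := by
      rw [hc1, zero_mul, zero_add] at h1
      exact h1
    rw [heq, hc1, hc0] at hne
    simp at hne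
  conv_lhs => rw [← hdiv]
  rw [hR0, zero_add, hcomm.eq]

lemma main_aux [FiniteDimensional F Q] (hdim : Module.finrank F Q = 4)
    (hcent : ∀ z : Q, (∀ w : Q, z * w = w * z) → ∃ r : F, z = algebraMap F Q r) :
    ∀ (n : ℕ) (P : Q[X]) (a : Fin n → Q),
      (∀ i, IsSphericalRoot F P (a i)) →
      (∀ i j, i ≠ j → ¬∃ q : Q, q ≠ 0 ∧ a j = q * a i * q⁻¹) →
      ∃ G : Q[X], P = G * (∏ i, minpoly F (a i)).map (algebraMap F Q) := by
  intro n
  induction n with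
  | zero =>
    intro P a _ _
    exact ⟨P, by simp⟩
  | succ n ih =>
    intro P a hsph hpair
    have h0 := hsph 0
    have hdivP := right_div hdim hcent P (a 0) h0
    set f0 := minpoly F (a 0) with hf0
    set fm0 := f0.map (algebraMap F Q) with hfm0
    set G := P /ₘ fm0 with hG
    have hint0 : IsIntegral F (a 0) := IsIntegral.of_finite F (a 0)
    have hd0 : f0.natDegree = 2 := minpoly_natDegree_two hdim hcent h0.1
    have hGs : ∀ i : Fin n, IsSphericalRoot F G (a i.succ) := by
      intro i
      refine ⟨(hsph i.succ).1, ?_⟩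
      intro g hg
      set q := g * a i.succ * g⁻¹ with hq
      have hPq : P.eval q = 0 := (hsph i.succ).2 g hg
      rw [hdivP, hfm0, eval_mul_map] at hPq
      rcases mul_eq_zero.mp hPq with h | h
      · exact h
      · exfalso
        have hqf : aeval q f0 = 0 := by rwa [aeval_def, ← eval_map]
        have haf : aeval (a 0) f0 = 0 := minpoly.aeval F (a 0)
        have r1 := quad_rel (minpoly.monic hint0) hd0 haf
        have r2 := quad_rel (minpoly.monic hint0) hd0 hqf
        obtain ⟨h, hh, hhq⟩ := conj_of_quad hcent h0.1 r1 r2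
        have hais : a i.succ = (g⁻¹ * h) * a 0 * (g⁻¹ * h)⁻¹ := by
          have hback : a i.succ = g⁻¹ * q * g := by
            rw [hq, ← mul_assoc, ← mul_assoc, inv_mul_cancel₀ hg, one_mul,
              mul_assoc, inv_mul_cancel₀ hg, mul_one]
          rw [hback, hhq, mul_inv_rev, inv_inv]
          simp [mul_assoc]
        exact hpair 0 i.succ (Fin.succ_ne_zero i).symm
          ⟨g⁻¹ * h, mul_ne_zero (inv_ne_zero hg) hh, hais⟩
    have hGp : ∀ i j : Fin n, i ≠ j →
        ¬∃ q : Q, q ≠ 0 ∧ a j.succ = q * a i.succ * q⁻¹ :=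
      fun i j hij => hpair i.succ j.succ (fun h => hij (Fin.succ_injective n h))
    obtain ⟨G', hG'⟩ := ih G (fun i => a i.succ) hGs hGp
    refine ⟨G', ?_⟩
    calc P = G * fm0 := hdivP
    _ = G' * (∏ i : Fin n, minpoly F (a i.succ)).map (algebraMap F Q) * fm0 := by rw [hG']
    _ = G' * ((∏ i : Fin n, minpoly F (a i.succ)).map (algebraMap F Q) * fm0) :=
        mul_assoc _ _ _
    _ = G' * (fm0 * (∏ i : Fin n, minpoly F (a i.succ)).map (algebraMap F Q)) := by
        rw [(commute_map_poly (∏ i : Fin n, minpoly F (a i.succ)) fm0).eq]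
    _ = G' * ((f0 * ∏ i : Fin n, minpoly F (a i.succ)).map (algebraMap F Q)) := by
        rw [Polynomial.map_mul]
    _ = G' * ((∏ i, minpoly F (a i)).map (algebraMap F Q)) := by
        rw [← Fin.prod_univ_succ (fun i => minpoly F (a i))]

end Aux

/-- If `P(x)` over a quaternion division algebra has spherical roots `a₁, …, aₙ` in
pairwise distinct conjugacy classes, then `P` is right-divisible by the product of their
minimal polynomials over `F`. -/
theorem stmt13 {F Q : Type*} [Field F] [DivisionRing Q] [Algebra F Q]
    [FiniteDimensional F Q] (hdim : Module.finrank F Q = 4)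
    (hcent : ∀ z : Q, (∀ w : Q, z * w = w * z) → ∃ r : F, z = algebraMap F Q r)
    (P : Q[X]) (n : ℕ) (a : Fin n → Q)
    (hsph : ∀ i, IsSphericalRoot F P (a i))
    (hpair : ∀ i j, i ≠ j → ¬∃ q : Q, q ≠ 0 ∧ a j = q * a i * q⁻¹) :
    ∃ G : Q[X], P = G * (∏ i, minpoly F (a i)).map (algebraMap F Q) := by
  exact main_aux hdim hcent n P a hsph hpair
end

section
/- Let Q be a quaternion division algebra over F and P(x) = x³ + ax² + bx + c ∈ Q[x]. If the coefficients a, b, c do not all lie in a common maximal subfield of Q, then P(x) has no spherical roots. -/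
open Polynomial

/-- Every non-central element of a 4-dimensional central division algebra satisfies a
quadratic equation over the center. -/
theorem quad_aux {F Q : Type*} [Field F] [DivisionRing Q] [Algebra F Q]
    [FiniteDimensional F Q] (hdim : Module.finrank F Q = 4)
    (hcent : ∀ z : Q, (∀ w : Q, z * w = w * z) → ∃ r : F, z = algebraMap F Q r)
    (q : Q) (hq : ¬∃ r : F, q = algebraMap F Q r) :
    ∃ s t : F, q ^ 2 = algebraMap F Q s + algebraMap F Q t * q := by
  letI K := Algebra.adjoin F ({q} : Set Q)
  letI : CommRing K := Algebra.adjoinCommRingOfComm F (by rintro a rfl b rfl; rfl)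
  letI : IsDomain K := inferInstance
  letI : Field K := fieldOfFiniteDimensional F K
  letI : IsScalarTower F K Q := inferInstance
  have htower : Module.finrank F K * Module.finrank K Q = Module.finrank F Q :=
    Module.finrank_mul_finrank F K Q
  have hqK : q ∈ K := Algebra.self_mem_adjoin_singleton F q
  set k1 : K := 1 with hk1
  set kq : K := ⟨q, hqK⟩ with hkq
  have hval : ∀ (s t : F) (x : K), s • k1 + t • kq = x →
      algebraMap F Q s + algebraMap F Q t * q = (x : Q) := by
    intro s t x hx
    have := congrArg (Subtype.val) hx
    simpa [Algebra.smul_def, hk1, hkq] using this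
  have hind : LinearIndependent F ![k1, kq] := by
    rw [LinearIndependent.pair_iff]
    intro s t hst
    have hst' : algebraMap F Q s + algebraMap F Q t * q = 0 := hval s t 0 (by simpa using hst)
    have ht : t = 0 := by
      by_contra ht
      apply hq
      refine ⟨-s / t, ?_⟩
      have htQ : algebraMap F Q t ≠ 0 := by
        simpa using (map_ne_zero (algebraMap F Q)).mpr ht
      have h1 : algebraMap F Q t * q = - algebraMap F Q s :=
        eq_neg_of_add_eq_zero_right hst'
      rw [map_div₀, map_neg, eq_div_iff htQ, ← Algebra.commutes t q, h1]
    subst ht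
    simp only [map_zero, zero_mul, add_zero] at hst'
    exact ⟨(algebraMap F Q).injective (by simpa using hst'), rfl⟩
  have hcard : (2 : ℕ) ≤ Module.finrank F K := by
    simpa using hind.fintype_card_le_finrank
  have hKQ : Module.finrank K Q ≠ 1 := by
    intro h1
    rw [h1, mul_one, hdim] at htower
    have hKtop : Subalgebra.toSubmodule K = ⊤ := by
      apply Submodule.eq_top_of_finrank_eq
      rw [hdim]; exact htower
    apply hq
    apply hcent
    intro w
    have hwK : w ∈ K := by
      have : w ∈ Subalgebra.toSubmodule K := hKtop ▸ Submodule.mem_top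
      exact this
    have := mul_comm (⟨q, hqK⟩ : K) ⟨w, hwK⟩
    exact congrArg Subtype.val this
  have hKQ0 : Module.finrank K Q ≠ 0 := by
    intro h0; rw [h0, mul_zero] at htower; omega
  have hm : Module.finrank F K = 2 := by
    set m := Module.finrank F K
    set n := Module.finrank K Q
    rw [hdim] at htower
    rcases Nat.lt_or_ge n 2 with hn | hn
    · interval_cases n <;> simp_all
    · nlinarith
  have hspan : Submodule.span F ({k1, kq} : Set K) = ⊤ := by
    have := hind.span_eq_top_of_card_eq_finrank (by simpa using hm.symm)
    rwa [show (Set.range ![k1, kq]) = {k1, kq} by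
      ext x; simp [Matrix.range_cons, Matrix.range_empty]; tauto] at this
  have hmem : kq * kq ∈ Submodule.span F ({k1, kq} : Set K) := hspan ▸ Submodule.mem_top
  rw [Submodule.mem_span_pair] at hmem
  obtain ⟨s, t, hst⟩ := hmem
  refine ⟨s, t, ?_⟩
  have := hval s t (kq * kq) hst
  rw [this, MulMemClass.coe_mul]
  simp [hkq, sq]

/-- If the coefficients `a, b, c` of `x³ + ax² + bx + c` over a quaternion division
algebra do not all lie in a common maximal subfield `F(d)` (`d` non-central), then the
polynomial has no spherical roots. -/
theorem stmt16 {F Q : Type*} [Field F] [DivisionRing Q] [Algebra F Q]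
    [FiniteDimensional F Q] (hdim : Module.finrank F Q = 4)
    (hcent : ∀ z : Q, (∀ w : Q, z * w = w * z) → ∃ r : F, z = algebraMap F Q r)
    (a b c : Q)
    (h : ¬∃ d : Q, (¬∃ r : F, d = algebraMap F Q r) ∧
      a ∈ Algebra.adjoin F {d} ∧ b ∈ Algebra.adjoin F {d} ∧ c ∈ Algebra.adjoin F {d}) :
    ¬∃ q : Q, IsSphericalRoot F (X ^ 3 + C a * X ^ 2 + C b * X + C c) q := by
  rintro ⟨q, hq, hroot⟩
  obtain ⟨s, t, hsq⟩ := quad_aux hdim hcent q hq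
  set S : Q := algebraMap F Q s with hS
  set T : Q := algebraMap F Q t with hT
  have hScomm : ∀ x : Q, S * x = x * S := fun x => Algebra.commutes s x
  have hTcomm : ∀ x : Q, T * x = x * T := fun x => Algebra.commutes t x
  -- conjugates satisfy the same quadratic
  have hconj : ∀ g : Q, g ≠ 0 → (g * q * g⁻¹) ^ 2 = S + T * (g * q * g⁻¹) := by
    intro g hg
    have h1 : (g * q * g⁻¹) ^ 2 = g * q ^ 2 * g⁻¹ := by
      rw [sq, sq]
      rw [show g * q * g⁻¹ * (g * q * g⁻¹) = g * q * (g⁻¹ * g) * q * g⁻¹ by noncomm_ring,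
        inv_mul_cancel₀ hg]
      noncomm_ring
    rw [h1, hsq]
    rw [show g * (S + T * q) * g⁻¹ = g * S * g⁻¹ + g * T * q * g⁻¹ by noncomm_ring]
    rw [← hScomm g, ← hTcomm g]
    rw [show S * g * g⁻¹ = S * (g * g⁻¹) by noncomm_ring, mul_inv_cancel₀ hg, mul_one]
    noncomm_ring
  set α : Q := S + T * T + a * T + b with hα'
  set β : Q := T * S + a * S + c with hβ'
  have key : ∀ g : Q, g ≠ 0 → α * (g * q * g⁻¹) + β = 0 := by
    intro g hg
    set z := g * q * g⁻¹ with hz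
    have hE : z ^ 3 + a * z ^ 2 + b * z + c = 0 := by
      have := hroot g hg
      simpa [show (X : Q[X]) ^ 3 = monomial 3 1 by simp [← C_mul_X_pow_eq_monomial]]
        using this
    have h2 : z ^ 2 = S + T * z := hconj g hg
    have h3 : z ^ 3 = S * z + T * (S + T * z) := by
      rw [pow_succ, h2]
      rw [show (S + T * z) * z = S * z + T * (z * z) by noncomm_ring, ← sq, h2]
    rw [h3, h2] at hE
    rw [← hE, hα', hβ']
    noncomm_ring
  -- α must vanish
  have hkey1 : α * q + β = 0 := by
    have := key 1 one_ne_zero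
    simpa using this
  have hα : α = 0 := by
    by_contra hα
    apply hq
    apply hcent
    intro w
    rcases eq_or_ne w 0 with rfl | hw
    · simp
    · have h1 := key w hw
      have h2 : α * (w * q * w⁻¹) = α * q := by
        have := h1.trans hkey1.symm
        exact add_right_cancel this
      have h3 : w * q * w⁻¹ = q := by
        have := mul_left_cancel₀ hα h2
        exact this
      calc q * w = w * q * w⁻¹ * w := by rw [h3]
        _ = w * q * (w⁻¹ * w) := by noncomm_ring
        _ = w * q := by rw [inv_mul_cancel₀ hw, mul_one]
  have hβ : β = 0 := by
    rw [hα, zero_mul, zero_add] at hkey1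
    exact hkey1
  have hb : b = -(S + T * T + a * T) := eq_neg_of_add_eq_zero_right hα
  have hc : c = -(T * S + a * S) := eq_neg_of_add_eq_zero_right hβ
  -- now derive the contradiction with `h`
  apply h
  by_cases ha : ∃ r : F, a = algebraMap F Q r
  · -- a central: then b, c central too; use d := q
    refine ⟨q, hq, ?_, ?_, ?_⟩
    · obtain ⟨r, hr⟩ := ha
      rw [hr]; exact Subalgebra.algebraMap_mem _ r
    · rw [hb]
      apply Subalgebra.neg_mem
      refine Subalgebra.add_mem _ (Subalgebra.add_mem _ ?_ ?_) (Subalgebra.mul_mem _ ?_ ?_)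
      · exact Subalgebra.algebraMap_mem _ s
      · exact Subalgebra.mul_mem _ (Subalgebra.algebraMap_mem _ t) (Subalgebra.algebraMap_mem _ t)
      · obtain ⟨r, hr⟩ := ha
        rw [hr]; exact Subalgebra.algebraMap_mem _ r
      · exact Subalgebra.algebraMap_mem _ t
    · rw [hc]
      apply Subalgebra.neg_mem
      refine Subalgebra.add_mem _ (Subalgebra.mul_mem _ ?_ ?_) (Subalgebra.mul_mem _ ?_ ?_)
      · exact Subalgebra.algebraMap_mem _ t
      · exact Subalgebra.algebraMap_mem _ s
      · obtain ⟨r, hr⟩ := ha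
        rw [hr]; exact Subalgebra.algebraMap_mem _ r
      · exact Subalgebra.algebraMap_mem _ s
  · -- a non-central: use d := a
    have haa : a ∈ Algebra.adjoin F ({a} : Set Q) := Algebra.self_mem_adjoin_singleton F a
    refine ⟨a, ha, haa, ?_, ?_⟩
    · rw [hb]
      apply Subalgebra.neg_mem
      refine Subalgebra.add_mem _ (Subalgebra.add_mem _ ?_ ?_) (Subalgebra.mul_mem _ haa ?_)
      · exact Subalgebra.algebraMap_mem _ s
      · exact Subalgebra.mul_mem _ (Subalgebra.algebraMap_mem _ t) (Subalgebra.algebraMap_mem _ t)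
      · exact Subalgebra.algebraMap_mem _ t
    · rw [hc]
      apply Subalgebra.neg_mem
      refine Subalgebra.add_mem _ (Subalgebra.mul_mem _ ?_ ?_) (Subalgebra.mul_mem _ haa ?_)
      · exact Subalgebra.algebraMap_mem _ t
      · exact Subalgebra.algebraMap_mem _ s
      · exact Subalgebra.algebraMap_mem _ s
end

section
/- Let H be the Hamiltonian quaternions and P(x) = xⁿ + aₙ₋₁xⁿ⁻¹ + ⋯ + a₀ ∈ H[x] a monic polynomial all of whose coefficients lie in ℝ except exactly one coefficient aₘ ∉ ℝ (0 ≤ m < n). Then P(x) has no spherical roots. -/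
open Polynomial

private lemma conj_pow_aux {H : Type*} [DivisionRing H] (g q : H) (hg : g ≠ 0) (i : ℕ) :
    (g * q * g⁻¹) ^ i = g * q ^ i * g⁻¹ := by
  induction i with
  | zero => simp [mul_inv_cancel₀ hg]
  | succ i ih =>
      rw [pow_succ, pow_succ, ih]
      simp only [mul_assoc, ← mul_assoc g⁻¹ g, inv_mul_cancel₀ hg, one_mul]

private lemma quat_central {a : Quaternion ℝ} (h : ∀ g : Quaternion ℝ, a * g = g * a) :
    ∃ r : ℝ, a = algebraMap ℝ (Quaternion ℝ) r := by
  refine ⟨a.re, ?_⟩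
  have hi := h ⟨0,1,0,0⟩
  have hj := h ⟨0,0,1,0⟩
  rw [Quaternion.ext_iff] at hi hj
  erw [Quaternion.re_mul, Quaternion.re_mul, Quaternion.imI_mul, Quaternion.imI_mul, Quaternion.imJ_mul, Quaternion.imJ_mul, Quaternion.imK_mul, Quaternion.imK_mul] at hi hj
  simp at hi hj
  have h1 : a.imI = 0 := by linarith [hj.2]
  have h2 : a.imJ = 0 := by linarith [hi.2]
  have h3 : a.imK = 0 := by linarith [hi.1]
  ext <;> simp [h1, h2, h3]

/-- A monic polynomial of degree `n` over the Hamiltonian quaternions, all of whose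
coefficients are real except exactly one coefficient `aₘ ∉ ℝ` with `m < n`, has no
spherical roots. -/
theorem stmt18 (n m : ℕ) (hmn : m < n) (P : Polynomial (Quaternion ℝ))
    (hmonic : P.Monic) (hdeg : P.natDegree = n)
    (hre : ∀ i : ℕ, i ≠ m → ∃ r : ℝ, P.coeff i = algebraMap ℝ (Quaternion ℝ) r)
    (hnotre : ¬∃ r : ℝ, P.coeff m = algebraMap ℝ (Quaternion ℝ) r) :
    ¬∃ q : Quaternion ℝ, IsSphericalRoot ℝ P q := by
  rintro ⟨q, hq1, hq2⟩
  have hq0 : q ≠ 0 := fun h => hq1 ⟨0, by simp [h]⟩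
  set N := P.natDegree + 1 with hN
  have hmN : m ∈ Finset.range N := Finset.mem_range.2 (by omega)
  have key : ∀ g : Quaternion ℝ, P.coeff m * g = g * P.coeff m := by
    intro g
    rcases eq_or_ne g 0 with rfl | hg
    · simp
    have h1 : (0 : Quaternion ℝ)
        = ∑ i ∈ Finset.range N, P.coeff i * g * (q ^ i * g⁻¹) := by
      rw [← hq2 g hg, eval_eq_sum_range]
      exact Finset.sum_congr rfl fun i _ => by
        rw [conj_pow_aux g q hg i, mul_assoc, mul_assoc]
    have h0 : P.eval q = 0 := by simpa using hq2 1 one_ne_zero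
    have h2 : (0 : Quaternion ℝ)
        = ∑ i ∈ Finset.range N, g * P.coeff i * (q ^ i * g⁻¹) := by
      have : (0 : Quaternion ℝ) = g * P.eval q * g⁻¹ := by rw [h0]; simp
      rw [this, eval_eq_sum_range, Finset.mul_sum, Finset.sum_mul]
      exact Finset.sum_congr rfl fun i _ => by noncomm_ring
    have h3 : ∑ i ∈ Finset.range N,
        (P.coeff i * g - g * P.coeff i) * (q ^ i * g⁻¹) = 0 := by
      simp only [sub_mul]
      rw [Finset.sum_sub_distrib, ← h1, ← h2, sub_zero]
    rw [Finset.sum_eq_single m (fun i _ hi => by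
        obtain ⟨r, hr⟩ := hre i hi
        rw [hr, Algebra.commutes, sub_self, zero_mul])
      (fun h => absurd hmN h)] at h3
    have hne : q ^ m * g⁻¹ ≠ 0 := mul_ne_zero (pow_ne_zero _ hq0) (inv_ne_zero hg)
    have := (mul_eq_zero.1 h3).resolve_right hne
    exact sub_eq_zero.1 this
  exact hnotre (quat_central key)
end

section
/- Let H be the Hamiltonian quaternions and P(x) = xⁿ + ⋯ ∈ H[x] a monic polynomial whose coefficients all lie in ℝ except possibly aₖ and aₘ with k > m, where aₖ, aₘ ∉ ℝ and aₖ ∈ ℝ(aₘ) (they lie in a common maximal subfield). If k = m + 1, then P(x) has no spherical roots; in general P(x) has at most (k−m)/2 distinct conjugacy classes of spherical roots. -/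
open Polynomial

namespace Stmt19Helpers

open Quaternion

noncomputable def imL : Quaternion ℝ →ₗ[ℝ] Quaternion ℝ where
  toFun := Quaternion.im
  map_add' a b := Quaternion.im_add a b
  map_smul' r a := by simp

lemma imL_apply (x : Quaternion ℝ) : imL x = x.im := rfl

lemma real_iff (x : Quaternion ℝ) :
    (∃ r : ℝ, x = algebraMap ℝ (Quaternion ℝ) r) ↔ x.im = 0 := by
  rw [Quaternion.algebraMap_def]
  constructor
  · rintro ⟨r, rfl⟩; simp
  · intro h
    refine ⟨x.re, ?_⟩
    have := x.re_add_im
    rw [h, add_zero] at this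
    exact this.symm

lemma coe_eq_smul_one (r : ℝ) : (r : Quaternion ℝ) = r • (1 : Quaternion ℝ) := by
  rw [← Quaternion.coe_one, Quaternion.smul_coe, mul_one]

lemma expand_mul (u : Quaternion ℝ) (hu : u * u = -1) (A B C D : ℝ) :
    ((A : Quaternion ℝ) + B • u) * ((C : Quaternion ℝ) + D • u)
      = ((A*C - B*D : ℝ) : Quaternion ℝ) + (A*D + B*C) • u := by
  have h1 : (B • u) * (D • u) = (B*D) • (u*u) := smul_mul_smul_comm B u D u
  rw [add_mul, mul_add, mul_add, h1, hu]
  rw [← Quaternion.coe_one]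
  simp only [mul_smul_comm, smul_mul_assoc, Quaternion.coe_mul_eq_smul,
    Quaternion.mul_coe_eq_smul, smul_neg, Quaternion.smul_coe, smul_smul]
  simp only [coe_eq_smul_one, mul_one]
  module

lemma pow_formula (u : Quaternion ℝ) (hu : u * u = -1) (z : ℂ) :
    ∀ i : ℕ, ((z.re : Quaternion ℝ) + z.im • u) ^ i
      = (((z^i).re : ℝ) : Quaternion ℝ) + (z^i).im • u := by
  intro i
  induction i with
  | zero => simp
  | succ i ih =>
    rw [pow_succ, ih, expand_mul u hu, pow_succ, Complex.mul_re, Complex.mul_im]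

lemma pure_sq (v : Quaternion ℝ) (h : v.re = 0) :
    v * v = -((Quaternion.normSq v : ℝ) : Quaternion ℝ) := by
  have := (Quaternion.sq_eq_neg_normSq (a := v)).2 h
  rwa [sq] at this

lemma exists_anticomm (v : Quaternion ℝ) (h0 : v.re = 0) (hv : v ≠ 0) :
    ∃ g : Quaternion ℝ, g ≠ 0 ∧ g * v = (-v) * g := by
  by_cases h : v.imI = 0 ∧ v.imJ = 0
  · obtain ⟨g, g0, g1, g2, g3⟩ : ∃ g : Quaternion ℝ, g.re = 0 ∧ g.imI = 1 ∧ g.imJ = 0 ∧ g.imK = 0 :=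
      ⟨⟨0,1,0,0⟩, rfl, rfl, rfl, rfl⟩
    refine ⟨g, ?_, ?_⟩
    · intro hg
      have := congrArg QuaternionAlgebra.imI hg
      simp [g1] at this
    · apply QuaternionAlgebra.ext <;>
        simp [Quaternion.re_mul, Quaternion.imI_mul, Quaternion.imJ_mul, Quaternion.imK_mul,
          h0, h.1, h.2, g0, g1, g2, g3] <;> ring
  · obtain ⟨g, g0, g1, g2, g3⟩ : ∃ g : Quaternion ℝ,
        g.re = 0 ∧ g.imI = v.imJ ∧ g.imJ = -v.imI ∧ g.imK = 0 :=
      ⟨⟨0, v.imJ, -v.imI, 0⟩, rfl, rfl, rfl, rfl⟩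
    refine ⟨g, ?_, ?_⟩
    · intro hg
      apply h
      have h1 := congrArg QuaternionAlgebra.imI hg
      have h2 := congrArg QuaternionAlgebra.imJ hg
      simp [g1, g2] at h1 h2
      exact ⟨by simpa using h2, h1⟩
    · apply QuaternionAlgebra.ext <;>
        simp [Quaternion.re_mul, Quaternion.imI_mul, Quaternion.imJ_mul, Quaternion.imK_mul,
          h0, g0, g1, g2, g3] <;> ring

lemma exists_similar (v w : Quaternion ℝ) (hv0 : v.re = 0) (hw0 : w.re = 0)
    (hnorm : Quaternion.normSq v = Quaternion.normSq w) (hv : v ≠ 0) :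
    ∃ g : Quaternion ℝ, g ≠ 0 ∧ g * v = w * g := by
  by_cases hw : w = -v
  · subst hw
    exact exists_anticomm v hv0 hv
  · refine ⟨((Quaternion.normSq v : ℝ) : Quaternion ℝ) - w * v, ?_, ?_⟩
    · intro hg
      apply hw
      have hre := congrArg QuaternionAlgebra.re hg
      have hSv : Quaternion.normSq v = v.imI^2 + v.imJ^2 + v.imK^2 := by
        rw [Quaternion.normSq_def', hv0]; ring
      have hSw : Quaternion.normSq w = w.imI^2 + w.imJ^2 + w.imK^2 := by
        rw [Quaternion.normSq_def', hw0]; ring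
      have hdot : Quaternion.normSq v + (w.imI * v.imI + w.imJ * v.imJ + w.imK * v.imK) = 0 := by
        have : ((Quaternion.normSq v : ℝ) : Quaternion ℝ).re - (w * v).re = 0 := by
          simpa using hre
        rw [Quaternion.re_mul, hv0, hw0] at this
        simp at this
        linarith [this]
      have key : (w.imI + v.imI)^2 + (w.imJ + v.imJ)^2 + (w.imK + v.imK)^2 = 0 := by
        nlinarith [hnorm, hSv, hSw, hdot]
      apply QuaternionAlgebra.ext
      · rw [hw0, Quaternion.re_neg, hv0, neg_zero]
      · have : w.imI + v.imI = 0 := by nlinarith [sq_nonneg (w.imI + v.imI), sq_nonneg (w.imJ + v.imJ), sq_nonneg (w.imK + v.imK)]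
        simp [Quaternion.imI_neg]; linarith
      · have : w.imJ + v.imJ = 0 := by nlinarith [sq_nonneg (w.imI + v.imI), sq_nonneg (w.imJ + v.imJ), sq_nonneg (w.imK + v.imK)]
        simp [Quaternion.imJ_neg]; linarith
      · have : w.imK + v.imK = 0 := by nlinarith [sq_nonneg (w.imI + v.imI), sq_nonneg (w.imJ + v.imJ), sq_nonneg (w.imK + v.imK)]
        simp [Quaternion.imK_neg]; linarith
    · have hvv := pure_sq v hv0
      have hww : w * w = -((Quaternion.normSq v : ℝ) : Quaternion ℝ) := by
        rw [pure_sq w hw0, hnorm]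
      rw [sub_mul, mul_sub, mul_assoc, hvv, ← mul_assoc, hww]
      simp only [mul_neg, neg_mul, sub_neg_eq_add, Quaternion.mul_coe_eq_smul,
        Quaternion.coe_mul_eq_smul]
      abel

lemma exists_conj (q q' : Quaternion ℝ) (hre : q.re = q'.re)
    (hnorm : Quaternion.normSq q.im = Quaternion.normSq q'.im) (hq : q.im ≠ 0) :
    ∃ g : Quaternion ℝ, g ≠ 0 ∧ q' = g * q * g⁻¹ := by
  obtain ⟨g, hg, hgv⟩ := exists_similar q.im q'.im (Quaternion.re_im q) (Quaternion.re_im q') hnorm hq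
  refine ⟨g, hg, ?_⟩
  have key : g * q = q' * g := by
    conv_lhs => rw [← Quaternion.re_add_im q]
    conv_rhs => rw [← Quaternion.re_add_im q']
    rw [mul_add, add_mul, hgv, ← hre]
    rw [Quaternion.mul_coe_eq_smul, Quaternion.coe_mul_eq_smul]
  rw [key, mul_inv_cancel_right₀ hg]

lemma pow_mem (x : Quaternion ℝ) : ∀ i : ℕ, ∃ r s : ℝ, x ^ i = (r : Quaternion ℝ) + s • x.im := by
  intro i
  induction i with
  | zero => exact ⟨1, 0, by simp⟩
  | succ i ih =>
    obtain ⟨r, s, hrs⟩ := ih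
    refine ⟨r * x.re - s * Quaternion.normSq x.im, r + s * x.re, ?_⟩
    have hx : x ^ (i+1) = ((r : Quaternion ℝ) + s • x.im) * ((x.re : Quaternion ℝ) + x.im) := by
      rw [pow_succ, hrs, Quaternion.re_add_im]
    rw [hx]
    rw [add_mul, mul_add, mul_add, smul_mul_assoc, smul_mul_assoc, pure_sq x.im (Quaternion.re_im x)]
    simp only [Quaternion.mul_coe_eq_smul, Quaternion.coe_mul_eq_smul, smul_neg, smul_smul]
    simp only [coe_eq_smul_one]
    push_cast
    module

lemma exists_t (am ak : Quaternion ℝ) (hsub : ak ∈ Algebra.adjoin ℝ ({am} : Set (Quaternion ℝ))) :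
    ∃ t : ℝ, ak.im = t • am.im := by
  rw [Algebra.adjoin_singleton_eq_range_aeval] at hsub
  obtain ⟨p, hp⟩ := hsub
  simp only [AlgHom.toRingHom_eq_coe, RingHom.coe_coe] at hp
  choose r s hs using pow_mem am
  refine ⟨∑ i ∈ Finset.range (p.natDegree + 1), p.coeff i * s i, ?_⟩
  have him : ak.im = imL ak := rfl
  rw [him, ← hp, Polynomial.aeval_eq_sum_range, map_sum]
  rw [Finset.sum_smul]
  refine Finset.sum_congr rfl fun i _ => ?_
  have : imL (am ^ i) = s i • am.im := by
    show (am ^ i).im = s i • am.im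
    rw [hs i]
    simp [Quaternion.im_add, Quaternion.im_coe, Quaternion.im_smul, Quaternion.im_idem]
  rw [map_smul, this, smul_smul]

lemma key (n k m : ℕ) (hmk : m < k) (hkn : k < n) (P : Polynomial (Quaternion ℝ))
    (hdeg : P.natDegree = n)
    (hre : ∀ i : ℕ, i ≠ k → i ≠ m → (P.coeff i).im = 0)
    (t : ℝ) (htk : (P.coeff k).im = t • (P.coeff m).im)
    (hm0 : (P.coeff m).im ≠ 0)
    (q : Quaternion ℝ) (hq : IsSphericalRoot ℝ P q) :
    ∃ z : ℂ, 0 < z.im ∧ z.re = q.re ∧ (z.im)^2 = Quaternion.normSq q.im ∧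
      (t : ℂ) * z^(k-m) = -1 := by
  have hqim : q.im ≠ 0 := fun h => hq.1 ((real_iff q).2 h)
  have hS : 0 < Quaternion.normSq q.im :=
    lt_of_le_of_ne (Quaternion.normSq_nonneg) (Ne.symm (Quaternion.normSq_ne_zero.2 hqim))
  set b := Real.sqrt (Quaternion.normSq q.im) with hbdef
  have hb : 0 < b := Real.sqrt_pos.2 hS
  have hb2 : b ^ 2 = Quaternion.normSq q.im := Real.sq_sqrt hS.le
  set u := b⁻¹ • q.im with hudef
  have huu : u * u = -1 := by
    have h1 : u * u = (b⁻¹ * b⁻¹) • (q.im * q.im) := smul_mul_smul_comm _ _ _ _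
    rw [h1, pure_sq q.im (Quaternion.re_im q), smul_neg, Quaternion.smul_coe]
    have : b⁻¹ * b⁻¹ * Quaternion.normSq q.im = 1 := by
      rw [← hb2]; field_simp
    rw [this, Quaternion.coe_one]
  set z : ℂ := ⟨q.re, b⟩ with hzdef
  have hzre : z.re = q.re := rfl
  have hzim : z.im = b := rfl
  have hzq : (z.re : Quaternion ℝ) + z.im • u = q := by
    show (q.re : Quaternion ℝ) + b • (b⁻¹ • q.im) = q
    rw [smul_smul, mul_inv_cancel₀ hb.ne', one_smul, Quaternion.re_add_im]
  have hzq' : (z.re : Quaternion ℝ) + z.im • (-u) = (q.re : Quaternion ℝ) - q.im := by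
    show (q.re : Quaternion ℝ) + b • (-(b⁻¹ • q.im)) = _
    rw [smul_neg, smul_smul, mul_inv_cancel₀ hb.ne', one_smul, sub_eq_add_neg]
  have h1 : P.eval q = 0 := by simpa using hq.2 1 one_ne_zero
  have h2 : P.eval ((q.re : Quaternion ℝ) - q.im) = 0 := by
    obtain ⟨g, hg, hgq⟩ := exists_conj q ((q.re : Quaternion ℝ) - q.im)
      (by simp) (by simp [Quaternion.normSq_neg]) hqim
    rw [hgq]; exact hq.2 g hg
  set A := ∑ i ∈ Finset.range (n+1), (z^i).re • P.coeff i with hA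
  set B := ∑ i ∈ Finset.range (n+1), (z^i).im • P.coeff i with hB
  have heval : ∀ w : Quaternion ℝ, w * w = -1 →
      P.eval ((z.re : Quaternion ℝ) + z.im • w) = A + B * w := by
    intro w hw
    rw [Polynomial.eval_eq_sum_range' (n := n+1) (by omega) _]
    rw [hA, hB, Finset.sum_mul, ← Finset.sum_add_distrib]
    refine Finset.sum_congr rfl fun i _ => ?_
    rw [pow_formula w hw z i, mul_add, Quaternion.mul_coe_eq_smul, mul_smul_comm,
      ← smul_mul_assoc]
  have e1 : A + B * u = 0 := by rw [← heval u huu, hzq, h1]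
  have e2 : A - B * u = 0 := by
    rw [sub_eq_add_neg, ← mul_neg, ← heval (-u) (by rw [neg_mul_neg]; exact huu), hzq', h2]
  have hAz : A = 0 := by
    have h3 : (A + B * u) + (A - B * u) = 0 := by rw [e1, e2, add_zero]
    have h4 : (2:ℝ) • A = 0 := by rw [two_smul, ← h3]; abel
    rcases smul_eq_zero.1 h4 with h | h
    · norm_num at h
    · exact h
  have hBz : B = 0 := by
    have h3 : B * u = 0 := by
      have := e1; rw [hAz, zero_add] at this; exact this
    rcases mul_eq_zero.1 h3 with h | h
    · exact h
    · rw [h, mul_zero] at huu; exact absurd huu.symm (by norm_num)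
  have extract : ∀ (c : ℕ → ℝ), (∑ i ∈ Finset.range (n+1), c i • P.coeff i) = 0 →
      c k • (P.coeff k).im + c m • (P.coeff m).im = 0 := by
    intro c hc
    have h5 : ∑ i ∈ Finset.range (n+1), c i • (P.coeff i).im = 0 := by
      have h6 := congrArg imL hc
      rw [map_sum, map_zero] at h6
      simpa only [map_smul, imL_apply] using h6
    have hss : ({k, m} : Finset ℕ) ⊆ Finset.range (n+1) := by
      intro x hx
      simp only [Finset.mem_insert, Finset.mem_singleton] at hx
      rcases hx with rfl | rfl <;> simp <;> omega
    have h7 : ∑ i ∈ ({k, m} : Finset ℕ), c i • (P.coeff i).im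
        = ∑ i ∈ Finset.range (n+1), c i • (P.coeff i).im := by
      refine Finset.sum_subset hss fun x _ hx => ?_
      simp only [Finset.mem_insert, Finset.mem_singleton] at hx
      push_neg at hx
      rw [hre x hx.1 hx.2, smul_zero]
    have h9 : ∑ i ∈ ({k, m} : Finset ℕ), c i • (P.coeff i).im
        = c k • (P.coeff k).im + c m • (P.coeff m).im := Finset.sum_pair (by omega)
    rw [← h9, h7, h5]
  have eA := extract _ hAz
  have eB := extract _ hBz
  have scalar_zero : ∀ c1 c2 : ℝ, c1 • (P.coeff k).im + c2 • (P.coeff m).im = 0 →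
      c1 * t + c2 = 0 := by
    intro c1 c2 hcc
    rw [htk, smul_smul, ← add_smul] at hcc
    rcases smul_eq_zero.1 hcc with h | h
    · exact h
    · exact absurd h hm0
  have sA : (z^k).re * t + (z^m).re = 0 := scalar_zero _ _ eA
  have sB : (z^k).im * t + (z^m).im = 0 := scalar_zero _ _ eB
  have hzc : (t:ℂ) * z^k + z^m = 0 := by
    apply Complex.ext <;>
      simp only [Complex.add_re, Complex.add_im, Complex.mul_re, Complex.mul_im,
        Complex.ofReal_re, Complex.ofReal_im, Complex.zero_re, Complex.zero_im] <;>
      linarith [sA, sB]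
  have hzne : z ≠ 0 := by
    intro h
    have : z.im = 0 := by rw [h]; rfl
    rw [hzim] at this
    exact hb.ne' this
  have h7 : ((t:ℂ) * z^(k-m) + 1) * z^m = 0 := by
    have h8 := hzc
    rw [show k = (k-m)+m from by omega, pow_add] at h8
    linear_combination h8
  have h8 : (t:ℂ) * z^(k-m) + 1 = 0 := by
    rcases mul_eq_zero.1 h7 with h | h
    · exact h
    · exact absurd h (pow_ne_zero _ hzne)
  exact ⟨z, hb, rfl, by rw [hzim, hb2], by linear_combination h8⟩


end Stmt19Helpers

open Stmt19Helpers

/-- A monic polynomial of degree `n` over the Hamiltonian quaternions whose coefficients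
are all real except possibly `aₖ, aₘ` (`k > m`), where `aₖ, aₘ ∉ ℝ` lie in a common
maximal subfield (`aₖ ∈ ℝ(aₘ)`), has no spherical roots if `k = m + 1`, and in general
has at most `(k − m)/2` distinct conjugacy classes of spherical roots. -/
theorem stmt19 (n k m : ℕ) (hmk : m < k) (hkn : k < n)
    (P : Polynomial (Quaternion ℝ)) (hmonic : P.Monic) (hdeg : P.natDegree = n)
    (hre : ∀ i : ℕ, i ≠ k → i ≠ m → ∃ r : ℝ, P.coeff i = algebraMap ℝ (Quaternion ℝ) r)
    (hknotre : ¬∃ r : ℝ, P.coeff k = algebraMap ℝ (Quaternion ℝ) r)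
    (hmnotre : ¬∃ r : ℝ, P.coeff m = algebraMap ℝ (Quaternion ℝ) r)
    (hsub : P.coeff k ∈ Algebra.adjoin ℝ ({P.coeff m} : Set (Quaternion ℝ))) :
    (k = m + 1 → ¬∃ q : Quaternion ℝ, IsSphericalRoot ℝ P q) ∧
    ∀ (j : ℕ) (a : Fin j → Quaternion ℝ),
      (∀ i, IsSphericalRoot ℝ P (a i)) →
      (∀ i i', i ≠ i' → ¬∃ g : Quaternion ℝ, g ≠ 0 ∧ a i' = g * a i * g⁻¹) →
      2 * j ≤ k - m := by
  have hre' : ∀ i : ℕ, i ≠ k → i ≠ m → (P.coeff i).im = 0 :=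
    fun i h1 h2 => (real_iff _).1 (hre i h1 h2)
  have hm0 : (P.coeff m).im ≠ 0 := fun h => hmnotre ((real_iff _).2 h)
  obtain ⟨t, htk⟩ := exists_t (P.coeff m) (P.coeff k) hsub
  have KEY := key n k m hmk hkn P hdeg hre' t htk hm0
  constructor
  · rintro hk ⟨q, hq⟩
    obtain ⟨z, hz1, _, _, hz4⟩ := KEY q hq
    rw [show k - m = 1 by omega, pow_one] at hz4
    have him := congrArg Complex.im hz4
    have hre2 := congrArg Complex.re hz4
    simp [Complex.mul_im, Complex.mul_re] at him hre2
    have ht : t ≠ 0 := by intro h; rw [h] at hre2; norm_num at hre2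
    rcases him with h | h
    · exact ht h
    · exact hz1.ne' h
  · intro j a hsph hpair
    rcases Nat.eq_zero_or_pos j with rfl | hj
    · omega
    choose zf hz1 hz2 hz3 hz4 using fun i => KEY (a i) (hsph i)
    have ht : t ≠ 0 := by
      intro h
      have := hz4 ⟨0, hj⟩
      rw [h] at this
      norm_num at this
    set d := k - m with hd
    have hd1 : d ≠ 0 := by omega
    set c : ℂ := -(t:ℂ)⁻¹ with hc
    have hroot : ∀ i, (zf i)^d = c := by
      intro i
      have htc : (t:ℂ) ≠ 0 := Complex.ofReal_ne_zero.2 ht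
      have h5 : zf i ^ d = (t:ℂ)⁻¹ * ((t:ℂ) * zf i ^ d) := by
        rw [← mul_assoc, inv_mul_cancel₀ htc, one_mul]
      rw [hc, h5, hz4 i, mul_neg, mul_one]
    have hzinj : Function.Injective zf := by
      intro i i' h
      by_contra hne
      have him : (a i).im ≠ 0 := fun h0 => (hsph i).1 ((real_iff _).2 h0)
      have hre3 : (a i).re = (a i').re := by rw [← hz2 i, ← hz2 i', h]
      have hn3 : Quaternion.normSq (a i).im = Quaternion.normSq (a i').im := by
        rw [← hz3 i, ← hz3 i', h]
      obtain ⟨g, hg, hgq⟩ := exists_conj (a i) (a i') hre3 hn3 him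
      exact hpair i i' hne ⟨g, hg, hgq⟩
    set F : Fin j ⊕ Fin j → ℂ := Sum.elim zf (fun i => (starRingEnd ℂ) (zf i)) with hF
    have hFinj : Function.Injective F := by
      rintro (i | i) (i' | i') h <;> simp only [hF, Sum.elim_inl, Sum.elim_inr] at h
      · rw [hzinj h]
      · exfalso
        have := congrArg Complex.im h
        rw [Complex.conj_im] at this
        have := hz1 i
        have := hz1 i'
        linarith
      · exfalso
        have := congrArg Complex.im h
        rw [Complex.conj_im] at this
        have := hz1 i
        have := hz1 i'
        linarith
      · have h2 := congrArg (starRingEnd ℂ) h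
        simp only [Complex.conj_conj] at h2
        rw [hzinj h2]
    set pc : ℂ[X] := X^d - C c with hpc
    have hpcm : pc.Monic := monic_X_pow_sub_C c hd1
    have hFroot : ∀ x, pc.IsRoot (F x) := by
      rintro (i | i) <;> simp only [hF, Sum.elim_inl, Sum.elim_inr, IsRoot, hpc, eval_sub,
        eval_pow, eval_X, eval_C]
      · rw [hroot i, sub_self]
      · rw [← map_pow, hroot i, hc]
        simp
    have hsubroots : Finset.univ.image F ⊆ pc.roots.toFinset := by
      intro x hx
      obtain ⟨y, _, rfl⟩ := Finset.mem_image.1 hx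
      rw [Multiset.mem_toFinset, mem_roots hpcm.ne_zero]
      exact hFroot y
    have hcard : (Finset.univ.image F).card = 2 * j := by
      rw [Finset.card_image_of_injective _ hFinj]
      simp [two_mul]
    have := Finset.card_le_card hsubroots
    have h6 : pc.roots.toFinset.card ≤ d := by
      refine le_trans (Multiset.toFinset_card_le _) ?_
      refine le_trans (Polynomial.card_roots' pc) ?_
      rw [hpc, natDegree_X_pow_sub_C]
    omega
end
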